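/- arXiv:1911.04829 — 4 statements merged into one kernel-verified Lean document; each statement's English description precedes it below -/
import Mathlib

section
/- If G is a finite group with the sum of orders of its normal subgroups at most 2|G|, then every abelian quotient of G is cyclic. -/
open scoped Classical

noncomputable def sigmaN (G : Type*) [Group G] [Fintype G] : ℕ :=
  ∑ H ∈ {H : Subgroup G | H.Normal}.toFinite.toFinset, Nat.card H

noncomputable def tauN (G : Type*) [Group G] [Fintype G] : ℕ :=
  {H : Subgroup G | H.Normal}.toFinite.toFinset.card

def IsLeinster (G : Type*) [Group G] [Fintype G] : Prop :=
  sigmaN G = 2 * Fintype.card G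

section AuxLemmas

open Function Finset

universe u

private lemma my_aux_torsion (A : Type*) [CommGroup A] [Fintype A]
    (hp : ∀ p : ℕ, p.Prime → Nat.card (MonoidHom.ker (powMonoidHom p : A →* A)) ≤ p) :
    ∀ n : ℕ, 0 < n → Nat.card (MonoidHom.ker (powMonoidHom n : A →* A)) ≤ n := by

  intro n
  induction n using Nat.strong_induction_on with
  | _ n ih =>
    intro hn
    rcases eq_or_ne n 1 with rfl | hn1
    · have : MonoidHom.ker (powMonoidHom 1 : A →* A) = ⊥ := by
        ext x; simp [MonoidHom.mem_ker, powMonoidHom_apply]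
      simp [this]
    · obtain ⟨p, hpp, hpd⟩ := Nat.exists_prime_and_dvd hn1
      obtain ⟨m, rfl⟩ := hpd
      have hm : 0 < m := Nat.pos_of_ne_zero (by rintro rfl; simp at hn)
      have hmlt : m < p * m := by
        simpa using (Nat.mul_lt_mul_right hm).mpr hpp.one_lt
      -- the hom from ker (pow (p*m)) to ker (pow p), x ↦ x^m
      set K := MonoidHom.ker (powMonoidHom (p * m) : A →* A)
      have hmem : ∀ x : K, (x : A) ^ m ∈ MonoidHom.ker (powMonoidHom p : A →* A) := by
        intro x
        have := x.2
        simp only [K, MonoidHom.mem_ker, powMonoidHom_apply] at this ⊢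
        rw [← pow_mul, mul_comm m p, this]
      let ψ : K →* MonoidHom.ker (powMonoidHom p : A →* A) :=
        { toFun := fun x => ⟨(x : A) ^ m, hmem x⟩
          map_one' := by ext; simp
          map_mul' := by intro x y; ext; simp [mul_pow] }
      have h1 : Nat.card K = Nat.card (K ⧸ ψ.ker) * Nat.card ψ.ker :=
        Subgroup.card_eq_card_quotient_mul_card_subgroup ψ.ker
      have h2 : Nat.card (K ⧸ ψ.ker) ≤ p := by
        have e := Nat.card_congr (QuotientGroup.quotientKerEquivRange ψ).toEquiv
        rw [e]
        calc Nat.card ψ.range ≤ Nat.card (MonoidHom.ker (powMonoidHom p : A →* A)) :=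
              Nat.card_le_card_of_injective _ Subtype.val_injective
        _ ≤ p := hp p hpp
      have h3 : Nat.card ψ.ker ≤ m := by
        have hinj : Function.Injective
            (fun x : ψ.ker => (⟨(x : K), by
              have := x.2
              simp only [MonoidHom.mem_ker, ψ] at this
              have : ((x : K) : A) ^ m = 1 := congrArg Subtype.val this
              simpa [MonoidHom.mem_ker, powMonoidHom_apply] using this⟩ :
              MonoidHom.ker (powMonoidHom m : A →* A))) := by
          intro x y hxy
          simp only [Subtype.mk.injEq] at hxy
          exact Subtype.ext (Subtype.ext hxy)
        calc Nat.card ψ.ker ≤ Nat.card (MonoidHom.ker (powMonoidHom m : A →* A)) :=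
              Nat.card_le_card_of_injective _ hinj
        _ ≤ m := ih m hmlt hm
      calc Nat.card K = Nat.card (K ⧸ ψ.ker) * Nat.card ψ.ker := h1
      _ ≤ p * m := Nat.mul_le_mul h2 h3

private lemma my_exists_big_ker (A : Type*) [CommGroup A] [Fintype A] (h : ¬IsCyclic A) :
    ∃ p : ℕ, p.Prime ∧ ∃ k, 2 ≤ k ∧
      Nat.card (MonoidHom.ker (powMonoidHom p : A →* A)) = p ^ k := by

  by_contra hc
  push_neg at hc
  apply h
  have hple : ∀ p : ℕ, p.Prime → Nat.card (MonoidHom.ker (powMonoidHom p : A →* A)) ≤ p := by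
    intro p hpp
    haveI : Fact p.Prime := ⟨hpp⟩
    have hpg : IsPGroup p (MonoidHom.ker (powMonoidHom p : A →* A)) := by
      intro x
      exact ⟨1, by
        have hx := x.2
        simp only [MonoidHom.mem_ker, powMonoidHom_apply] at hx
        ext
        simpa using hx⟩
    obtain ⟨k, hk⟩ := (IsPGroup.iff_card).mp hpg
    rcases Nat.lt_or_ge k 2 with hk2 | hk2
    · rw [hk]
      calc p ^ k ≤ p ^ 1 := Nat.pow_le_pow_right hpp.pos (by omega)
      _ = p := pow_one p
    · exact absurd hk (hc p hpp k hk2)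
  apply isCyclic_of_card_pow_eq_one_le
  intro n hn
  have := my_aux_torsion A hple n hn
  calc #{a : A | a ^ n = 1} = Nat.card (MonoidHom.ker (powMonoidHom n : A →* A)) := by
        rw [Nat.card_eq_fintype_card, Fintype.card_subtype]
        congr 1
        ext a
        simp [MonoidHom.mem_ker, powMonoidHom_apply]
  _ ≤ n := this

private lemma my_quot_torsion (A : Type u) [CommGroup A] [Fintype A] (p : ℕ) :
    ∃ (E : Type u) (_ : CommGroup E) (f : A →* E), Surjective f ∧
      Nat.card E = Nat.card (MonoidHom.ker (powMonoidHom p : A →* A)) ∧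
      ∀ x : E, x ^ p = 1 := by

  set R := (powMonoidHom p : A →* A).range
  set K := (powMonoidHom p : A →* A).ker
  refine ⟨A ⧸ R, inferInstance, QuotientGroup.mk' R, QuotientGroup.mk'_surjective R, ?_, ?_⟩
  · have h1 : Nat.card A = Nat.card (A ⧸ R) * Nat.card R :=
      Subgroup.card_eq_card_quotient_mul_card_subgroup R
    have h2 : Nat.card A = Nat.card (A ⧸ K) * Nat.card K :=
      Subgroup.card_eq_card_quotient_mul_card_subgroup K
    have h3 : Nat.card (A ⧸ K) = Nat.card R :=
      Nat.card_congr (QuotientGroup.quotientKerEquivRange (powMonoidHom p : A →* A)).toEquiv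
    have hRpos : 0 < Nat.card R := Nat.card_pos
    have : Nat.card (A ⧸ R) * Nat.card R = Nat.card K * Nat.card R := by
      rw [← h1, h2, h3, mul_comm]
    exact Nat.eq_of_mul_eq_mul_right hRpos this
  · intro x
    obtain ⟨a, rfl⟩ := QuotientGroup.mk'_surjective R x
    rw [← map_pow]
    rw [QuotientGroup.mk'_apply, QuotientGroup.eq_one_iff]
    exact ⟨a, rfl⟩

private lemma my_aux_reduce (p : ℕ) (hp : p.Prime) : ∀ (k : ℕ) (A : Type u) [CommGroup A],
    Nat.card A = p ^ (k + 2) → (∀ x : A, x ^ p = 1) →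
    ∃ (Q : Type u) (_ : CommGroup Q) (f : A →* Q), Surjective f ∧
      Nat.card Q = p ^ 2 ∧ ∀ x : Q, x ^ p = 1 := by

  intro k
  induction k with
  | zero =>
    intro A _ hcard htor
    exact ⟨A, inferInstance, MonoidHom.id A, surjective_id, hcard, htor⟩
  | succ k ih =>
    intro A _ hcard htor
    have hfin : Finite A := Nat.finite_of_card_ne_zero (by rw [hcard]; exact pow_ne_zero _ hp.pos.ne')
    have hnt : Nontrivial A := by
      rw [← Finite.one_lt_card_iff_nontrivial, hcard]
      exact one_lt_pow₀ hp.one_lt (by omega)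
    obtain ⟨x, hx⟩ := exists_ne (1 : A)
    have hord : orderOf x = p := by
      have h1 : orderOf x ∣ p := orderOf_dvd_of_pow_eq_one (htor x)
      rcases (Nat.Prime.eq_one_or_self_of_dvd hp _ h1) with h | h
      · exact absurd (orderOf_eq_one_iff.mp h) hx
      · exact h
    set Z := Subgroup.zpowers x
    have hZ : Nat.card Z = p := by rw [Nat.card_zpowers, hord]
    have hE : Nat.card (A ⧸ Z) = p ^ (k + 2) := by
      have h1 : Nat.card A = Nat.card (A ⧸ Z) * Nat.card Z :=
        Subgroup.card_eq_card_quotient_mul_card_subgroup Z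
      have : Nat.card (A ⧸ Z) * p = p ^ (k + 2) * p := by
        calc Nat.card (A ⧸ Z) * p = Nat.card (A ⧸ Z) * Nat.card Z := by rw [hZ]
        _ = Nat.card A := h1.symm
        _ = p ^ (k + 2) * p := by rw [hcard]; ring
      exact Nat.eq_of_mul_eq_mul_right hp.pos this
    have htorE : ∀ y : A ⧸ Z, y ^ p = 1 := by
      intro y
      obtain ⟨a, rfl⟩ := QuotientGroup.mk'_surjective Z y
      rw [← map_pow, htor a, map_one]
    obtain ⟨Q, _, f, hf, hQ, hQt⟩ := ih (A ⧸ Z) hE htorE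
    exact ⟨Q, ‹_›, f.comp (QuotientGroup.mk' Z), hf.comp (QuotientGroup.mk'_surjective Z), hQ, hQt⟩

private lemma my_sum_bound (Q : Type*) [Group Q] [Fintype Q] (p : ℕ) (hp : p.Prime)
    (hcard : Nat.card Q = p ^ 2) (htor : ∀ x : Q, x ^ p = 1) :
    2 * p ^ 2 + 1 ≤ ∑ H : Subgroup Q, Nat.card H := by

  have hnt : Nontrivial Q := by
    rw [← Finite.one_lt_card_iff_nontrivial, hcard]
    exact one_lt_pow₀ hp.one_lt (by omega)
  have hord : ∀ x : Q, x ≠ 1 → orderOf x = p := by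
    intro x hx
    have h1 : orderOf x ∣ p := orderOf_dvd_of_pow_eq_one (htor x)
    rcases hp.eq_one_or_self_of_dvd _ h1 with h | h
    · exact absurd (orderOf_eq_one_iff.mp h) hx
    · exact h
  set S : Finset (Subgroup Q) := univ.filter (fun H => H ≠ ⊥ ∧ H ≠ ⊤) with hS
  -- every member of S has cardinality p
  have hcardS : ∀ H ∈ S, Nat.card H = p := by
    intro H hH
    rw [hS, mem_filter] at hH
    obtain ⟨-, hHb, hHt⟩ := hH
    have hdvd : Nat.card H ∣ p ^ 2 := hcard ▸ Subgroup.card_subgroup_dvd_card H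
    obtain ⟨i, hi2, hieq⟩ := (Nat.dvd_prime_pow hp).mp hdvd
    interval_cases i
    · rw [pow_zero] at hieq
      exact absurd (Subgroup.card_eq_one.mp hieq) hHb
    · rw [pow_one] at hieq; exact hieq
    · rw [← hcard] at hieq
      exact absurd (Subgroup.eq_top_of_card_eq H hieq) hHt
  -- zpowers of nontrivial elements lie in S
  have hzp : ∀ x : Q, x ≠ 1 → Subgroup.zpowers x ∈ S := by
    intro x hx
    rw [hS, mem_filter]
    refine ⟨mem_univ _, ?_, ?_⟩
    · rw [Ne, Subgroup.zpowers_eq_bot]; exact hx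
    · intro htop
      have : Nat.card (Subgroup.zpowers x) = p := by rw [Nat.card_zpowers, hord x hx]
      rw [htop, Subgroup.card_top, hcard] at this
      nlinarith [hp.one_lt]
  -- S has at least two elements
  have hS2 : 2 ≤ S.card := by
    obtain ⟨x, hx⟩ := exists_ne (1 : Q)
    have hx1 : Subgroup.zpowers x ∈ S := hzp x hx
    have hlt : Subgroup.zpowers x ≠ ⊤ := by
      rw [hS, mem_filter] at hx1; exact hx1.2.2
    obtain ⟨y, -, hy⟩ := SetLike.exists_of_lt (lt_top_iff_ne_top.mpr hlt : Subgroup.zpowers x < ⊤)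
    have hy1 : y ≠ 1 := by rintro rfl; exact hy (one_mem _)
    have hy2 : Subgroup.zpowers y ∈ S := hzp y hy1
    refine Finset.one_lt_card.mpr ⟨_, hx1, _, hy2, ?_⟩
    intro he
    exact hy (he ▸ Subgroup.mem_zpowers y)
  -- fiber count
  set T : Finset Q := univ.filter (· ≠ (1 : Q)) with hT
  have hTcard : T.card + 1 = p ^ 2 := by
    have : insert (1 : Q) T = univ := by
      ext z; simp [hT]; tauto
    have h1 : (insert (1 : Q) T).card = T.card + 1 :=
      Finset.card_insert_of_notMem (by simp [hT])
    rw [this] at h1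
    rw [← h1, Finset.card_univ, ← Nat.card_eq_fintype_card, hcard]
  have hfib := Finset.card_eq_sum_card_fiberwise
    (f := fun x : Q => Subgroup.zpowers x) (s := T) (t := S)
    (by intro x hx; exact hzp x (by simpa [hT] using hx))
  have hfible : ∀ H ∈ S, (T.filter fun x => Subgroup.zpowers x = H).card + 1 ≤ p := by
    intro H hH
    have hsub : insert (1 : Q) (T.filter fun x => Subgroup.zpowers x = H) ⊆
        univ.filter (fun z => z ∈ H) := by
      intro z hz
      rcases Finset.mem_insert.mp hz with rfl | hz
      · simp [one_mem]
      · rw [mem_filter] at hz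
        simp only [mem_filter, mem_univ, true_and]
        rw [← hz.2]; exact Subgroup.mem_zpowers z
    have h1 : (insert (1 : Q) (T.filter fun x => Subgroup.zpowers x = H)).card =
        (T.filter fun x => Subgroup.zpowers x = H).card + 1 :=
      Finset.card_insert_of_notMem (by simp [hT])
    have h2 : (univ.filter (fun z => z ∈ H)).card = Nat.card H := by
      rw [Nat.card_eq_fintype_card, Fintype.card_subtype]
    calc (T.filter fun x => Subgroup.zpowers x = H).card + 1
        = (insert (1 : Q) (T.filter fun x => Subgroup.zpowers x = H)).card := h1.symm
      _ ≤ (univ.filter (fun z => z ∈ H)).card := Finset.card_le_card hsub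
      _ = Nat.card H := h2
      _ = p := hcardS H hH
  -- hence T.card + S.card ≤ S.card * p
  have hkey : T.card + S.card ≤ S.card * p := by
    rw [hfib]
    calc (∑ H ∈ S, (T.filter fun x => Subgroup.zpowers x = H).card) + S.card
        = ∑ H ∈ S, ((T.filter fun x => Subgroup.zpowers x = H).card + 1) := by
          rw [Finset.sum_add_distrib, Finset.sum_const, smul_eq_mul, mul_one]
      _ ≤ ∑ _H ∈ S, p := Finset.sum_le_sum hfible
      _ = S.card * p := by rw [Finset.sum_const, smul_eq_mul]
  -- sum over S
  have hsumS : p ^ 2 + 1 ≤ ∑ H ∈ S, Nat.card H := by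
    have heq : ∑ H ∈ S, Nat.card H = S.card * p := by
      rw [Finset.sum_congr rfl hcardS, Finset.sum_const, smul_eq_mul]
    rw [heq]
    exact le_trans (by omega : p ^ 2 + 1 ≤ T.card + S.card) hkey
  -- assemble
  have hbt : (⊥ : Subgroup Q) ∉ insert (⊤ : Subgroup Q) S := by
    rw [Finset.mem_insert]
    push_neg
    exact ⟨bot_ne_top, by simp [hS]⟩
  have hts : (⊤ : Subgroup Q) ∉ S := by simp [hS]
  have hsub : insert (⊥ : Subgroup Q) (insert ⊤ S) ⊆ univ := Finset.subset_univ _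
  calc 2 * p ^ 2 + 1 ≤ 1 + (p ^ 2 + (p ^ 2 + 1)) := by omega
    _ ≤ Nat.card (⊥ : Subgroup Q) + (Nat.card (⊤ : Subgroup Q) + ∑ H ∈ S, Nat.card H) := by
        rw [Subgroup.card_bot, Subgroup.card_top, hcard]
        omega
    _ = ∑ H ∈ insert (⊥ : Subgroup Q) (insert ⊤ S), Nat.card H := by
        rw [Finset.sum_insert hbt, Finset.sum_insert hts]
    _ ≤ ∑ H : Subgroup Q, Nat.card H := Finset.sum_le_sum_of_subset hsub

end AuxLemmas

theorem stmt1 (G : Type*) [Group G] [Fintype G] (h : sigmaN G ≤ 2 * Fintype.card G)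
    (N : Subgroup G) [N.Normal] (hab : ∀ a b : G ⧸ N, a * b = b * a) :
    IsCyclic (G ⧸ N) := by

  by_contra hnc
  letI : CommGroup (G ⧸ N) := { (inferInstance : Group (G ⧸ N)) with mul_comm := hab }
  haveI : Fintype (G ⧸ N) := Fintype.ofFinite _
  obtain ⟨p, hp, k, hk, hker⟩ := my_exists_big_ker (G ⧸ N) hnc
  obtain ⟨E, _, f1, hf1, hE, hEt⟩ := my_quot_torsion (G ⧸ N) p
  rw [hker] at hE
  obtain ⟨k', rfl⟩ := Nat.exists_eq_add_of_le hk
  obtain ⟨Q, _, f2, hf2, hQ, hQt⟩ := my_aux_reduce p hp k' E (by rw [hE]; ring_nf) hEt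
  set φ : G →* Q := (f2.comp f1).comp (QuotientGroup.mk' N) with hφdef
  have hφ : Function.Surjective φ := hf2.comp (hf1.comp (QuotientGroup.mk'_surjective N))
  haveI : Finite Q := Nat.finite_of_card_ne_zero (by rw [hQ]; exact pow_ne_zero _ hp.pos.ne')
  haveI : Fintype Q := Fintype.ofFinite Q
  set m := Nat.card φ.ker with hmdef
  have hm : 0 < m := Nat.card_pos
  have hGcard : Nat.card G = m * p ^ 2 := by
    have h1 := Subgroup.card_eq_card_quotient_mul_card_subgroup φ.ker
    have he : Nat.card (G ⧸ φ.ker) = Nat.card Q :=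
      Nat.card_congr (QuotientGroup.quotientKerEquivOfSurjective φ hφ).toEquiv
    rw [he, hQ] at h1
    rw [h1, mul_comm]
  have hcomap : ∀ H : Subgroup Q, Nat.card (H.comap φ) = m * Nat.card H := by
    intro H
    have h1 : Nat.card (H.comap φ) * (H.comap φ).index = Nat.card G :=
      Subgroup.card_mul_index _
    have h2 : (H.comap φ).index = H.index := Subgroup.index_comap_of_surjective H hφ
    have h3 : Nat.card H * H.index = Nat.card Q := Subgroup.card_mul_index _
    have hip : 0 < H.index := Nat.pos_of_ne_zero (Subgroup.index_ne_zero_of_finite)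
    apply Nat.eq_of_mul_eq_mul_right hip
    calc Nat.card (H.comap φ) * H.index = Nat.card G := by rw [← h2]; exact h1
      _ = m * (Nat.card H * H.index) := by rw [hGcard, ← hQ, ← h3]
      _ = m * Nat.card H * H.index := by ring
  set SG : Finset (Subgroup G) :=
    (Finset.univ : Finset (Subgroup Q)).image (fun H => H.comap φ) with hSG
  have hinj : Function.Injective (fun H : Subgroup Q => H.comap φ) := Subgroup.comap_injective hφ
  have hnorm : ∀ H : Subgroup Q, (H.comap φ).Normal := by
    intro H
    constructor
    intro n hn g
    simp only [Subgroup.mem_comap, map_mul, map_inv] at hn ⊢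
    have hc : φ g * φ n * (φ g)⁻¹ = φ n := by
      rw [mul_comm (φ g) (φ n), mul_assoc, mul_inv_cancel, mul_one]
    rw [hc]
    exact hn
  have hsubset : SG ⊆ {H : Subgroup G | H.Normal}.toFinite.toFinset := by
    intro H hH
    rw [Set.Finite.mem_toFinset]
    obtain ⟨K, -, rfl⟩ := Finset.mem_image.mp hH
    exact hnorm K
  have hsum : ∑ H ∈ SG, Nat.card H = m * ∑ H : Subgroup Q, Nat.card H := by
    rw [hSG, Finset.sum_image (fun a _ b _ hab' => hinj hab')]
    rw [Finset.sum_congr rfl (fun K _ => hcomap K), ← Finset.mul_sum]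
  have hb := my_sum_bound Q p hp hQ hQt
  have hfinal : 2 * Fintype.card G + m ≤ sigmaN G := by
    calc 2 * Fintype.card G + m = m * (2 * p ^ 2 + 1) := by
          rw [← Nat.card_eq_fintype_card, hGcard]; ring
      _ ≤ m * ∑ H : Subgroup Q, Nat.card H := Nat.mul_le_mul_left m hb
      _ = ∑ H ∈ SG, Nat.card H := hsum.symm
      _ ≤ sigmaN G := Finset.sum_le_sum_of_subset hsubset
  omega
end

section
/- The group Q₂₀ × C₁₉ is a Leinster group, where Q₂₀ is the generalized quaternion (dicyclic) group of order 20. -/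
open scoped Classical

set_option linter.unusedSectionVars false


section Goursat
variable {A B : Type*} [Group A] [Group B] [Fintype A] [Fintype B]

lemma mem_left_of_coprime (hco : Nat.Coprime (Fintype.card A) (Fintype.card B))
    {H : Subgroup (A × B)} {x : A} {y : B} (h : (x, y) ∈ H) : ((x, 1) : A × B) ∈ H := by
  have h1 : ((x, y) : A × B) ^ Fintype.card B ∈ H := H.pow_mem h _
  rw [Prod.pow_mk, pow_card_eq_one] at h1
  have hcop : (Fintype.card B).Coprime (orderOf x) :=
    Nat.Coprime.coprime_dvd_right (orderOf_dvd_card) hco.symm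
  obtain ⟨m, hm⟩ := exists_pow_eq_self_of_coprime hcop
  have h2 := H.pow_mem h1 m
  rwa [Prod.pow_mk, one_pow, hm] at h2

lemma mem_right_of_coprime (hco : Nat.Coprime (Fintype.card A) (Fintype.card B))
    {H : Subgroup (A × B)} {x : A} {y : B} (h : (x, y) ∈ H) : ((1, y) : A × B) ∈ H := by
  have h1 : ((x, y) : A × B) ^ Fintype.card A ∈ H := H.pow_mem h _
  rw [Prod.pow_mk, pow_card_eq_one] at h1
  have hcop : (Fintype.card A).Coprime (orderOf y) :=
    Nat.Coprime.coprime_dvd_right (orderOf_dvd_card) hco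
  obtain ⟨m, hm⟩ := exists_pow_eq_self_of_coprime hcop
  have h2 := H.pow_mem h1 m
  rwa [Prod.pow_mk, one_pow, hm] at h2

lemma subgroup_eq_prod_of_coprime (hco : Nat.Coprime (Fintype.card A) (Fintype.card B))
    (H : Subgroup (A × B)) :
    H = (H.map (MonoidHom.fst A B)).prod (H.map (MonoidHom.snd A B)) := by
  apply le_antisymm
  · rintro ⟨x, y⟩ h
    exact ⟨⟨(x, y), h, rfl⟩, ⟨(x, y), h, rfl⟩⟩
  · rintro ⟨x, y⟩ ⟨hx, hy⟩
    obtain ⟨⟨x', y'⟩, hx', hx2⟩ := hx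
    obtain ⟨⟨x'', y''⟩, hy', hy2⟩ := hy
    simp only [MonoidHom.coe_fst, MonoidHom.coe_snd] at hx2 hy2
    subst hx2; subst hy2
    have h1 := mem_left_of_coprime hco hx'
    have h2 := mem_right_of_coprime hco hy'
    have := H.mul_mem h1 h2
    rwa [Prod.mk_mul_mk, mul_one, one_mul] at this

lemma map_fst_prod (K : Subgroup A) (L : Subgroup B) :
    (K.prod L).map (MonoidHom.fst A B) = K := by
  ext x
  constructor
  · rintro ⟨⟨x', y'⟩, ⟨hx, _⟩, rfl⟩; exact hx
  · intro hx; exact ⟨(x, 1), ⟨hx, L.one_mem⟩, rfl⟩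

lemma map_snd_prod (K : Subgroup A) (L : Subgroup B) :
    (K.prod L).map (MonoidHom.snd A B) = L := by
  ext y
  constructor
  · rintro ⟨⟨x', y'⟩, ⟨_, hy⟩, rfl⟩; exact hy
  · intro hy; exact ⟨(1, y), ⟨K.one_mem, hy⟩, rfl⟩

lemma card_prod_subgroup (K : Subgroup A) (L : Subgroup B) :
    Nat.card (K.prod L) = Nat.card K * Nat.card L := by
  rw [Nat.card_congr (K.prodEquiv L).toEquiv, Nat.card_prod]

lemma sigmaN_prod (hco : Nat.Coprime (Fintype.card A) (Fintype.card B)) :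
    sigmaN (A × B) = sigmaN A * sigmaN B := by
  classical
  rw [sigmaN, sigmaN, sigmaN, Finset.sum_mul_sum, ← Finset.sum_product']
  refine Finset.sum_nbij' (fun H => (H.map (MonoidHom.fst A B), H.map (MonoidHom.snd A B)))
    (fun KL => KL.1.prod KL.2) ?_ ?_ ?_ ?_ ?_
  · intro H hH
    rw [Set.Finite.mem_toFinset] at hH
    rw [Finset.mem_product, Set.Finite.mem_toFinset, Set.Finite.mem_toFinset]
    exact ⟨hH.map _ Prod.fst_surjective, hH.map _ Prod.snd_surjective⟩
  · rintro ⟨K, L⟩ hKL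
    rw [Finset.mem_product, Set.Finite.mem_toFinset, Set.Finite.mem_toFinset] at hKL
    rw [Set.Finite.mem_toFinset]
    haveI : K.Normal := hKL.1; haveI : L.Normal := hKL.2
    exact Subgroup.prod_normal K L
  · intro H hH
    exact (subgroup_eq_prod_of_coprime hco H).symm
  · rintro ⟨K, L⟩ _
    simp only [map_fst_prod, map_snd_prod]
  · intro H hH
    exact (congrArg (fun K : Subgroup (A × B) => Nat.card K)
      (subgroup_eq_prod_of_coprime hco H)).trans (card_prod_subgroup _ _)
end Goursat


open QuaternionGroup

abbrev Q20 := QuaternionGroup 5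

def Hc2 : Subgroup Q20 where
  carrier := {x | x = 1 ∨ x = a 5}
  one_mem' := by decide
  mul_mem' := by decide
  inv_mem' := by decide

def Hc5 : Subgroup Q20 where
  carrier := {x | x = 1 ∨ x = a 2 ∨ x = a 4 ∨ x = a 6 ∨ x = a 8}
  one_mem' := by decide
  mul_mem' := by decide
  inv_mem' := by decide

def Hc10 : Subgroup Q20 where
  carrier := {x | ∃ j, x = a j}
  one_mem' := ⟨0, rfl⟩
  mul_mem' := by rintro x y ⟨i, rfl⟩ ⟨j, rfl⟩; exact ⟨i + j, rfl⟩
  inv_mem' := by rintro x ⟨i, rfl⟩; exact ⟨-i, rfl⟩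

instance : DecidablePred (· ∈ Hc2) := fun x => inferInstanceAs (Decidable (x = 1 ∨ _))
instance : DecidablePred (· ∈ Hc5) := fun x => inferInstanceAs (Decidable (x = 1 ∨ _))
instance : DecidablePred (· ∈ Hc10) := fun x => inferInstanceAs (Decidable (∃ j, x = a j))

lemma card_Hc2 : Nat.card Hc2 = 2 := by rw [Nat.card_eq_fintype_card]; decide
lemma card_Hc5 : Nat.card Hc5 = 5 := by rw [Nat.card_eq_fintype_card]; decide
lemma card_Hc10 : Nat.card Hc10 = 10 := by rw [Nat.card_eq_fintype_card]; decide

lemma card_Q20 : Nat.card Q20 = 20 := by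
  rw [Nat.card_eq_fintype_card, QuaternionGroup.card]

lemma normal_Hc2 : Hc2.Normal :=
  ⟨fun x hx g => by
    revert hx; show (x = 1 ∨ _) → (_ = 1 ∨ _); revert x g; decide⟩

lemma normal_Hc5 : Hc5.Normal :=
  ⟨fun x hx g => by
    revert hx; show (x = 1 ∨ _) → (_ = 1 ∨ _); revert x g; decide⟩

@[simp] lemma a_inv (i : ZMod 10) : (a i : Q20)⁻¹ = a (-i) := rfl
@[simp] lemma xa_inv (i : ZMod 10) : (xa i : Q20)⁻¹ = xa (5 + i) := rfl

lemma normal_Hc10 : Hc10.Normal :=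
  ⟨fun x hx g => by
    obtain ⟨i, rfl⟩ := hx
    rcases g with j | j
    · exact ⟨i, by simp [a_mul_a]⟩
    · exact ⟨-i, by
        simp [xa_mul_a, xa_mul_xa]
        ring_nf
        rw [show (10 : ZMod (2*5)) = 0 by decide, zero_sub]⟩⟩

lemma pow_two_mem (g : Q20) (h : g ^ 2 = 1) : g ∈ Hc2 := by revert h; revert g; decide
lemma pow_five_mem (g : Q20) (h : g ^ 5 = 1) : g ∈ Hc5 := by revert h; revert g; decide

lemma classify (H : Subgroup Q20) (hn : H.Normal) :
    H = ⊥ ∨ H = Hc2 ∨ H = Hc5 ∨ H = Hc10 ∨ H = ⊤ := by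
  have hdvd : Nat.card H ∣ 20 := card_Q20 ▸ H.card_subgroup_dvd_card
  by_cases hxa : ∃ i, xa i ∈ H
  · obtain ⟨i, hi⟩ := hxa
    have h2 : xa (i - 2) ∈ H := by
      have := hn.conj_mem _ hi (a 1)
      have e : a 1 * xa i * (a 1)⁻¹ = xa (i - 2) := by
        simp only [a_mul_xa, a_inv, xa_mul_a]
        congr 1
        ring
      rwa [e] at this
    have h3 : (a 3 : Q20) ∈ H := by
      have := H.mul_mem hi h2
      have e : (xa i : Q20) * xa (i - 2) = a 3 := by
        rw [QuaternionGroup.xa_mul_xa]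
        congr 1
        have : ((5 : ℕ) : ZMod 10) = 5 := by norm_num
        rw [this]; ring
      rwa [e] at this
    have hord : orderOf (a 3 : Q20) = 10 := by
      rw [QuaternionGroup.orderOf_a]; decide
    have h10 : 10 ∣ Nat.card H := hord ▸ H.orderOf_dvd_natCard h3
    have : Nat.card H = 10 ∨ Nat.card H = 20 := by
      have hle : Nat.card H ≤ 20 := Nat.le_of_dvd (by norm_num) hdvd
      have hpos : 0 < Nat.card H := Nat.card_pos
      interval_cases h : Nat.card H <;> revert hdvd h10 <;> decide
    rcases this with h | h
    · exfalso
      have hle : Subgroup.zpowers (a 3 : Q20) ≤ H := Subgroup.zpowers_le.mpr h3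
      have hcard : Nat.card H ≤ Nat.card (Subgroup.zpowers (a 3 : Q20)) := by
        rw [Nat.card_zpowers, hord, h]
      have heq := Subgroup.eq_of_le_of_card_ge hle hcard
      have : xa i ∈ Subgroup.zpowers (a 3 : Q20) := heq ▸ hi
      have hsub : Subgroup.zpowers (a 3 : Q20) ≤ Hc10 := Subgroup.zpowers_le.mpr ⟨3, rfl⟩
      obtain ⟨j, hj⟩ := hsub this
      simp at hj
    · right; right; right; right
      exact Subgroup.eq_top_of_card_eq H (by rw [h, card_Q20])
  · push_neg at hxa
    have hle10 : H ≤ Hc10 := by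
      intro x hx
      rcases x with j | j
      · exact ⟨j, rfl⟩
      · exact absurd hx (hxa j)
    have hdvd10 : Nat.card H ∣ 10 := card_Hc10 ▸ Subgroup.card_dvd_of_le hle10
    have hcases : Nat.card H = 1 ∨ Nat.card H = 2 ∨ Nat.card H = 5 ∨ Nat.card H = 10 := by
      have hle : Nat.card H ≤ 10 := Nat.le_of_dvd (by norm_num) hdvd10
      have hpos : 0 < Nat.card H := Nat.card_pos
      interval_cases h : Nat.card H <;> revert hdvd10 <;> decide
    rcases hcases with h | h | h | h
    · exact Or.inl (Subgroup.card_eq_one.mp h)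
    · refine Or.inr (Or.inl ?_)
      have hle2 : H ≤ Hc2 := fun x hx => pow_two_mem x
        (orderOf_dvd_iff_pow_eq_one.mp ((H.orderOf_dvd_natCard hx).trans (dvd_of_eq h)))
      exact Subgroup.eq_of_le_of_card_ge hle2 (by rw [card_Hc2, h])
    · refine Or.inr (Or.inr (Or.inl ?_))
      have hle5 : H ≤ Hc5 := fun x hx => pow_five_mem x
        (orderOf_dvd_iff_pow_eq_one.mp ((H.orderOf_dvd_natCard hx).trans (dvd_of_eq h)))
      exact Subgroup.eq_of_le_of_card_ge hle5 (by rw [card_Hc5, h])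
    · exact Or.inr (Or.inr (Or.inr (Or.inl
        (Subgroup.eq_of_le_of_card_ge hle10 (by rw [card_Hc10, h])))))


lemma subgroup_card_ne {G : Type*} [Group G] {K L : Subgroup G}
    (h : Nat.card K ≠ Nat.card L) : K ≠ L := fun e => h (by rw [e])

lemma normal_finset_Q20 :
    ({H : Subgroup Q20 | H.Normal}).toFinite.toFinset
      = ({⊥, Hc2, Hc5, Hc10, ⊤} : Finset (Subgroup Q20)) := by
  ext H
  rw [Set.Finite.mem_toFinset]
  simp only [Set.mem_setOf_eq, Finset.mem_insert, Finset.mem_singleton]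
  constructor
  · exact fun h => classify H h
  · rintro (rfl | rfl | rfl | rfl | rfl)
    exacts [inferInstance, normal_Hc2, normal_Hc5, normal_Hc10, inferInstance]

lemma card_top_Q20 : Nat.card ((⊤ : Subgroup Q20)) = 20 := by
  rw [Subgroup.card_top, card_Q20]

lemma sigmaN_Q20 : sigmaN Q20 = 38 := by
  have h1 : Nat.card ((⊥ : Subgroup Q20)) = 1 := Subgroup.card_bot
  rw [sigmaN, normal_finset_Q20]
  rw [Finset.sum_insert (by
    simp only [Finset.mem_insert, Finset.mem_singleton, not_or]
    exact ⟨subgroup_card_ne (by rw [h1, card_Hc2]; norm_num),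
      subgroup_card_ne (by rw [h1, card_Hc5]; norm_num),
      subgroup_card_ne (by rw [h1, card_Hc10]; norm_num),
      subgroup_card_ne (by rw [h1, card_top_Q20]; norm_num)⟩)]
  rw [Finset.sum_insert (by
    simp only [Finset.mem_insert, Finset.mem_singleton, not_or]
    exact ⟨subgroup_card_ne (by rw [card_Hc2, card_Hc5]; norm_num),
      subgroup_card_ne (by rw [card_Hc2, card_Hc10]; norm_num),
      subgroup_card_ne (by rw [card_Hc2, card_top_Q20]; norm_num)⟩)]
  rw [Finset.sum_insert (by
    simp only [Finset.mem_insert, Finset.mem_singleton, not_or]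
    exact ⟨subgroup_card_ne (by rw [card_Hc5, card_Hc10]; norm_num),
      subgroup_card_ne (by rw [card_Hc5, card_top_Q20]; norm_num)⟩)]
  rw [Finset.sum_insert (by
    simp only [Finset.mem_singleton]
    exact subgroup_card_ne (by rw [card_Hc10, card_top_Q20]; norm_num))]
  rw [Finset.sum_singleton]
  rw [h1, card_Hc2, card_Hc5, card_Hc10, card_top_Q20]
  norm_num

abbrev C19 := Multiplicative (ZMod 19)

lemma card_C19 : Nat.card C19 = 19 := by
  simp [Nat.card_eq_fintype_card]

lemma classify19 (H : Subgroup C19) : H = ⊥ ∨ H = ⊤ := by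
  have hdvd : Nat.card H ∣ 19 := by
    have := H.card_subgroup_dvd_card
    rwa [card_C19] at this
  rcases ((by norm_num : Nat.Prime 19).eq_one_or_self_of_dvd _ hdvd) with h | h
  · exact Or.inl (Subgroup.card_eq_one.mp h)
  · exact Or.inr (Subgroup.eq_top_of_card_eq H (by rw [h, card_C19]))

lemma normal_finset_C19 :
    ({H : Subgroup C19 | H.Normal}).toFinite.toFinset
      = ({⊥, ⊤} : Finset (Subgroup C19)) := by
  ext H
  rw [Set.Finite.mem_toFinset]
  simp only [Set.mem_setOf_eq, Finset.mem_insert, Finset.mem_singleton]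
  constructor
  · exact fun _ => classify19 H
  · rintro (rfl | rfl) <;> infer_instance

lemma sigmaN_C19 : sigmaN C19 = 20 := by
  rw [sigmaN, normal_finset_C19]
  rw [Finset.sum_insert (by
    simp only [Finset.mem_singleton]
    exact subgroup_card_ne (by rw [Subgroup.card_bot, Subgroup.card_top, card_C19]; norm_num))]
  rw [Finset.sum_singleton, Subgroup.card_bot, Subgroup.card_top, card_C19]

theorem stmt3 : IsLeinster (QuaternionGroup 5 × Multiplicative (ZMod 19)) := by
  have hco : Nat.Coprime (Fintype.card Q20) (Fintype.card C19) := by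
    rw [QuaternionGroup.card]
    norm_num [Nat.Coprime]
  unfold IsLeinster
  rw [sigmaN_prod hco, sigmaN_Q20, sigmaN_C19, Fintype.card_prod, QuaternionGroup.card]
  norm_num
end

section
/- If G is a Leinster group of order p²qr with p < q < r primes, then the commutator subgroup of G does not have order r. -/
open scoped Classical Pointwise commutatorElement

section helpers
variable {G₀ : Type*} [Group G₀]


lemma card_comap_mk' [Finite G₀] (W : Subgroup G₀) [W.Normal] (B : Subgroup (G₀ ⧸ W)) :
    Nat.card (B.comap (QuotientGroup.mk' W)) = Nat.card B * Nat.card W := by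
  have hs : Function.Surjective (QuotientGroup.mk' W) := QuotientGroup.mk'_surjective W
  have h1 : (B.comap (QuotientGroup.mk' W)).index = B.index :=
    Subgroup.index_comap_of_surjective B hs
  have h2 := Subgroup.card_mul_index (B.comap (QuotientGroup.mk' W))
  have h3 := Subgroup.card_mul_index B
  have h4 := Subgroup.card_eq_card_quotient_mul_card_subgroup (α := G₀) W
  have hipos : 0 < B.index := Nat.pos_of_ne_zero B.index_ne_zero_of_finite
  rw [h1] at h2
  have key : Nat.card (B.comap (QuotientGroup.mk' W)) * B.index
      = (Nat.card B * Nat.card W) * B.index := by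
    rw [h2, h4, ← h3]; ring
  exact Nat.eq_of_mul_eq_mul_right hipos key

lemma card_sup_of_disjoint [Finite G₀] (H K : Subgroup G₀) [K.Normal] (h : H ⊓ K = ⊥) :
    Nat.card (H ⊔ K : Subgroup G₀) = Nat.card H * Nat.card K := by
  have hset : (↑(H ⊔ K) : Set G₀) = (H : Set G₀) * (K : Set G₀) := Subgroup.mul_normal H K
  have hbij : Function.Bijective (fun x : H × K => (⟨x.1 * x.2,
      by exact mul_mem (Subgroup.mem_sup_left x.1.2) (Subgroup.mem_sup_right x.2.2)⟩ :
      (H ⊔ K : Subgroup G₀))) := by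
    constructor
    · rintro ⟨⟨a, ha⟩, ⟨b, hb⟩⟩ ⟨⟨c, hc⟩, ⟨d, hd⟩⟩ hab
      simp only [Subtype.mk.injEq] at hab
      have hmem : c⁻¹ * a ∈ H ⊓ K := by
        rw [Subgroup.mem_inf]
        refine ⟨mul_mem (inv_mem hc) ha, ?_⟩
        have hdb : c⁻¹ * a = d * b⁻¹ := by
          have ha2 : a = c * (d * b⁻¹) := by
            rw [← mul_assoc, ← hab, mul_assoc, mul_inv_cancel, mul_one]
          rw [ha2, ← mul_assoc, inv_mul_cancel, one_mul]
        rw [hdb]; exact mul_mem hd (inv_mem hb)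
      rw [h, Subgroup.mem_bot, inv_mul_eq_one] at hmem
      subst hmem
      have hbd : b = d := by
        exact mul_left_cancel hab
      simp [hbd]
    · rintro ⟨x, hx⟩
      have : x ∈ (H : Set G₀) * (K : Set G₀) := by rw [← hset]; exact hx
      obtain ⟨a, ha, b, hb, rfl⟩ := this
      exact ⟨(⟨a, ha⟩, ⟨b, hb⟩), rfl⟩
  calc Nat.card (H ⊔ K : Subgroup G₀) = Nat.card (H × K) := (Nat.card_eq_of_bijective _ hbij).symm
    _ = Nat.card H * Nat.card K := Nat.card_prod _ _


lemma hall_le [Finite G₀] {M N₁ N₂ : Subgroup G₀} (hn₂ : N₂.Normal)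
    (h₁ : N₁ ≤ M) (h₂ : N₂ ≤ M) {d e : ℕ}
    (hd1 : Nat.card N₁ = d) (hd2 : Nat.card N₂ = d) (hM : Nat.card M = d * e)
    (hcop : d.Coprime e) : N₁ ≤ N₂ := by
  haveI : (N₂.subgroupOf M).Normal := hn₂.subgroupOf M
  have hdpos : 0 < d := by rw [← hd1]; exact Nat.card_pos
  have hcard2 : Nat.card (N₂.subgroupOf M) = d := by
    rw [← hd2]; exact Nat.card_congr (Subgroup.subgroupOfEquivOfLe h₂).toEquiv
  have hqcard : Nat.card (M ⧸ N₂.subgroupOf M) = e := by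
    have h4 := Subgroup.card_eq_card_quotient_mul_card_subgroup (N₂.subgroupOf M)
    rw [hcard2, hM] at h4
    have h5 : Nat.card (M ⧸ N₂.subgroupOf M) * d = e * d := by
      rw [← h4]; ring
    exact Nat.eq_of_mul_eq_mul_right hdpos h5
  intro x hx
  set ξ : M := ⟨x, h₁ hx⟩ with hξ
  have hordx : orderOf ξ ∣ d := by
    have e1 : orderOf (M.subtype ξ) = orderOf ξ := orderOf_injective M.subtype M.subtype_injective ξ
    have e2 : orderOf (N₁.subtype ⟨x, hx⟩) = orderOf (⟨x, hx⟩ : N₁) :=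
      orderOf_injective N₁.subtype N₁.subtype_injective _
    have e3 : M.subtype ξ = N₁.subtype ⟨x, hx⟩ := rfl
    rw [← e1, e3, e2, ← hd1]
    exact orderOf_dvd_natCard _
  have hordy : orderOf ((ξ : M ⧸ N₂.subgroupOf M)) ∣ d :=
    dvd_trans (orderOf_map_dvd (QuotientGroup.mk' (N₂.subgroupOf M)) ξ) hordx
  have hordy2 : orderOf ((ξ : M ⧸ N₂.subgroupOf M)) ∣ e := by
    rw [← hqcard]; exact orderOf_dvd_natCard _
  have : orderOf ((ξ : M ⧸ N₂.subgroupOf M)) = 1 :=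
    Nat.eq_one_of_dvd_coprimes hcop hordy hordy2
  have hξmem : ξ ∈ N₂.subgroupOf M := by
    rw [← QuotientGroup.eq_one_iff]
    exact orderOf_eq_one_iff.mp this
  exact (Subgroup.mem_subgroupOf).mp hξmem

lemma divides_p2q {p q d : ℕ} (hp : p.Prime) (hq : q.Prime) (hne : p ≠ q)
    (hd : d ∣ p ^ 2 * q) : d = 1 ∨ d = p ∨ d = p ^ 2 ∨ d = q ∨ d = p * q ∨ d = p ^ 2 * q := by
  by_cases hqd : q ∣ d
  · obtain ⟨m, rfl⟩ := hqd
    have hm : m ∣ p ^ 2 := by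
      have h6 : q * m ∣ q * p ^ 2 := by
        calc q * m ∣ p ^ 2 * q := hd
          _ = q * p ^ 2 := by ring
      exact (mul_dvd_mul_iff_left hq.pos.ne').mp h6
    obtain ⟨i, hi, rfl⟩ := (Nat.dvd_prime_pow hp).mp hm
    interval_cases i
    · simp
    · right; right; right; right; left; rw [pow_one]; ring
    · right; right; right; right; right; ring
  · have hcop : d.Coprime q := (Nat.Prime.coprime_iff_not_dvd hq).mpr hqd |>.symm
    have hdp : d ∣ p ^ 2 := (Nat.Coprime.dvd_of_dvd_mul_right hcop) hd
    obtain ⟨i, hi, rfl⟩ := (Nat.dvd_prime_pow hp).mp hdp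
    interval_cases i
    · simp
    · right; left; rw [pow_one]
    · right; right; left; rfl


lemma subgroup_eq_of_le_of_card_le [Finite G₀] {H K : Subgroup G₀} (h : H ≤ K)
    (hc : Nat.card K ≤ Nat.card H) : H = K := by
  have hfin : (K : Set G₀).Finite := Set.toFinite _
  have h1 : Nat.card H = (H : Set G₀).ncard := (Nat.card_coe_set_eq _)
  have h2 : Nat.card K = (K : Set G₀).ncard := (Nat.card_coe_set_eq _)
  have := Set.eq_of_subset_of_ncard_le (t := (K : Set G₀)) (s := (H : Set G₀)) h
    (by rw [← h1, ← h2]; exact hc) hfin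
  exact SetLike.ext' this

def expSubgroup (hcomm : ∀ a b : G₀, a * b = b * a) (n : ℕ) : Subgroup G₀ where
  carrier := {x | x ^ n = 1}
  one_mem' := one_pow n
  mul_mem' := by
    intro a b ha hb
    simp only [Set.mem_setOf_eq] at *
    rw [Commute.mul_pow (hcomm a b), ha, hb, mul_one]
  inv_mem' := by
    intro a ha
    simp only [Set.mem_setOf_eq] at *
    rw [inv_pow, ha, inv_one]

lemma mem_expSubgroup {hcomm : ∀ a b : G₀, a * b = b * a} {n : ℕ} {x : G₀} :
    x ∈ expSubgroup hcomm n ↔ x ^ n = 1 := Iff.rfl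

lemma isPGroup_expSubgroup (hcomm : ∀ a b : G₀, a * b = b * a) (p k : ℕ) :
    IsPGroup p (expSubgroup hcomm (p ^ k)) := by
  intro x
  refine ⟨k, ?_⟩
  have hx := x.2
  simp only [expSubgroup, Subgroup.mem_mk, Set.mem_setOf_eq] at hx
  ext
  push_cast
  simpa using hx

-- numeric final lemma for case 2
lemma numeric2 {p q r k : ℕ} (hp : p.Prime) (hq : q.Prime) (hr : r.Prime)
    (hpq : p < q) (hqr : q < r) (hk : 1 ≤ k)
    (hkdef : k + (1 + p + p ^ 2) * (1 + q) = 2 * (p ^ 2 * q))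
    (hle : r * k ≤ 1 + p + p ^ 2 + q + p * q) : False := by
  have hp2 : 2 ≤ p := hp.two_le
  have hq3 : 3 ≤ q := by omega
  have hqodd : q % 2 = 1 := by
    rcases hq.eq_two_or_odd with h | h
    · omega
    · exact h
  have hrodd : r % 2 = 1 := by
    rcases hr.eq_two_or_odd with h | h
    · omega
    · exact h
  have hrq2 : q + 2 ≤ r := by omega
  rcases Nat.lt_or_ge p 3 with hp2' | hp3
  · -- p = 2
    have hpe : p = 2 := by omega
    subst hpe
    norm_num at hkdef hle
    -- hkdef : k + (7 + 7q) = 16q → k = q - 7 shape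
    have hkval : k + 7 = q := by omega
    have hq8 : 8 ≤ q := by omega
    have hq11 : 11 ≤ q := by
      rcases Nat.lt_or_ge q 11 with hlt | hge
      · interval_cases q <;> revert hq <;> decide
      · exact hge
    have h1 : (q + 2) * k ≤ r * k := Nat.mul_le_mul hrq2 (le_refl k)
    nlinarith [hle, h1, hq11, hkval]
  · rcases Nat.lt_or_ge p 4 with hp3' | hp4
    · -- p = 3
      have hpe : p = 3 := by omega
      subst hpe
      norm_num at hkdef hle
      have hkval : k + 13 = 5 * q := by omega
      have hq5 : 5 ≤ q := by omega
      have h1 : (q + 2) * k ≤ r * k := Nat.mul_le_mul hrq2 (le_refl k)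
      nlinarith [hle, h1, hq5, hkval]
    · -- p ≥ 4
      have hpodd : p % 2 = 1 := by
        rcases hp.eq_two_or_odd with h | h
        · omega
        · exact h
      have hqp2 : p + 2 ≤ q := by omega
      have hc : p ^ 2 + p + 1 ≤ k := by
        zify at hkdef ⊢
        have hA : (0:ℤ) ≤ ((q:ℤ) - (p + 2)) * ((p:ℤ) ^ 2 - p - 1) := by
          apply mul_nonneg
          · have : (p:ℤ) + 2 ≤ (q:ℤ) := by exact_mod_cast hqp2
            linarith
          · have : (4:ℤ) ≤ (p:ℤ) := by exact_mod_cast hp4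
            nlinarith
        have hB : (0:ℤ) ≤ (p:ℤ) ^ 3 - (p:ℤ) ^ 2 - 5 * p - 4 := by
          have h4 : (4:ℤ) ≤ (p:ℤ) := by exact_mod_cast hp4
          nlinarith
        nlinarith [hA, hB]
      have h1 : (q + 2) * (p ^ 2 + p + 1) ≤ r * k := Nat.mul_le_mul hrq2 hc
      nlinarith [hle, h1, hp2, hq3]

end helpers

set_option maxHeartbeats 2000000 in
theorem stmt8 (G : Type*) [Group G] [Fintype G] (p q r : ℕ)
    (hp : p.Prime) (hq : q.Prime) (hr : r.Prime) (hpq : p < q) (hqr : q < r)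
    (hcard : Fintype.card G = p ^ 2 * q * r) (h : IsLeinster G) :
    Nat.card (commutator G) ≠ r := by
  intro hG'
  haveI : Fact p.Prime := ⟨hp⟩
  haveI : Fact q.Prime := ⟨hq⟩
  haveI : Fact r.Prime := ⟨hr⟩
  have hp2 : 2 ≤ p := hp.two_le
  have hq2 : 2 ≤ q := hq.two_le
  have hr2 : 2 ≤ r := hr.two_le
  set K : Subgroup G := commutator G with hKdef
  have hcardG : Nat.card G = p ^ 2 * q * r := by rw [Nat.card_eq_fintype_card, hcard]
  set Q := G ⧸ K with hQdef
  set π : G →* Q := QuotientGroup.mk' K with hπdef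
  have hπs : Function.Surjective π := QuotientGroup.mk'_surjective K
  have hkerπ : π.ker = K := QuotientGroup.ker_mk' K
  have hcardQ : Nat.card Q = p ^ 2 * q := by
    have h4 := Subgroup.card_eq_card_quotient_mul_card_subgroup K
    rw [hG', hcardG] at h4
    exact (Nat.eq_of_mul_eq_mul_right hr.pos h4.symm)
  haveI : Fintype Q := Fintype.ofFinite Q
  have hcomm : ∀ a b : Q, a * b = b * a := by
    intro a b
    obtain ⟨x, rfl⟩ := hπs a
    obtain ⟨y, rfl⟩ := hπs b
    have hx : π x = QuotientGroup.mk x := rfl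
    have hy : π y = QuotientGroup.mk y := rfl
    rw [hx, hy, ← QuotientGroup.mk_mul, ← QuotientGroup.mk_mul, QuotientGroup.eq]
    have : (x * y)⁻¹ * (y * x) = ⁅y⁻¹, x⁻¹⁆ := by
      simp [commutatorElement_def]; group
    rw [this, hKdef, commutator_def]
    exact Subgroup.commutator_mem_commutator (Subgroup.mem_top _) (Subgroup.mem_top _)
  have normQ : ∀ B : Subgroup Q, B.Normal := by
    intro B
    constructor
    intro n hn g
    have : g * n * g⁻¹ = n := by rw [hcomm g n, mul_assoc]; simp
    rwa [this]
  have hcopq : Nat.Coprime p q := (Nat.coprime_primes hp hq).mpr (by omega)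
  have hrnd : ¬ r ∣ p ^ 2 * q := by
    intro hdvd
    rcases (Nat.Prime.dvd_mul hr).mp hdvd with h1 | h1
    · rcases (Nat.Prime.dvd_mul hr).mp ((pow_two p ▸ h1)) with h2 | h2 <;>
        exact absurd (Nat.le_of_dvd hp.pos h2) (by omega)
    · exact absurd (Nat.le_of_dvd hq.pos h1) (by omega)
  have hqnep2 : q ≠ p ^ 2 := by
    intro hcontra
    have : p ∣ q := hcontra ▸ dvd_pow_self p (by omega)
    rcases (Nat.Prime.eq_one_or_self_of_dvd hq p this) with h1 | h1 <;> omega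
  have n12 : (1:ℕ) ≠ p := by omega
  have n13 : (1:ℕ) ≠ p ^ 2 := by nlinarith [hp2, sq_nonneg p]

  have n14 : (1:ℕ) ≠ q := by omega
  have n15 : (1:ℕ) ≠ p * q := by nlinarith
  have n16 : (1:ℕ) ≠ p ^ 2 * q := by nlinarith
  have n23 : p ≠ p ^ 2 := by nlinarith
  have n24 : p ≠ q := by omega
  have n25 : p ≠ p * q := by nlinarith
  have n26 : p ≠ p ^ 2 * q := by nlinarith
  have n34 : p ^ 2 ≠ q := fun hc => hqnep2 hc.symm
  have n35 : p ^ 2 ≠ p * q := by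
    intro hc
    have : p * p = p * q := by rw [← hc]; ring
    have := Nat.eq_of_mul_eq_mul_left (by omega) this
    omega
  have n36 : p ^ 2 ≠ p ^ 2 * q := by
    intro hc
    have h1 : p ^ 2 * 1 = p ^ 2 * q := by rw [mul_one, ← hc]
    have := Nat.eq_of_mul_eq_mul_left (by positivity) h1
    omega
  have n45 : q ≠ p * q := by
    intro hc
    have h1 : 1 * q = p * q := by rw [one_mul, ← hc]
    have := Nat.eq_of_mul_eq_mul_right (by omega : 0 < q) h1
    omega
  have n46 : q ≠ p ^ 2 * q := by
    intro hc
    have h1 : 1 * q = p ^ 2 * q := by rw [one_mul, ← hc]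
    have := Nat.eq_of_mul_eq_mul_right (by omega : 0 < q) h1
    exact n13 this
  have n56 : p * q ≠ p ^ 2 * q := by
    intro hc
    have h1 : q * p = q * (p ^ 2) := by rw [mul_comm q p, hc]; ring
    have := Nat.eq_of_mul_eq_mul_left (by omega : 0 < q) h1
    exact n23 this
  -- the Leinster sum
  have hσ : ∑ H ∈ {H : Subgroup G | H.Normal}.toFinite.toFinset, Nat.card H
      = 2 * (p ^ 2 * q * r) := by
    have := h
    unfold IsLeinster sigmaN at this
    rw [this, hcard]
  set 𝒩 : Finset (Subgroup G) := {H : Subgroup G | H.Normal}.toFinite.toFinset with h𝒩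
  have hmem𝒩 : ∀ H : Subgroup G, H ∈ 𝒩 ↔ H.Normal := by
    intro H; rw [h𝒩, Set.Finite.mem_toFinset]; rfl
  have hcomapcard : ∀ B : Subgroup Q, Nat.card (B.comap π) = Nat.card B * r := by
    intro B
    rw [hπdef, card_comap_mk' K B, hG']
  have hcomapnormal : ∀ B : Subgroup Q, (B.comap π).Normal := by
    intro B
    exact (normQ B).comap π
  have hcomapinj : Function.Injective (fun B : Subgroup Q => B.comap π) :=
    Subgroup.comap_injective hπs
  have hsubdvd : ∀ B : Subgroup Q, Nat.card B ∣ p ^ 2 * q := by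
    intro B
    rw [← hcardQ]
    exact Subgroup.card_subgroup_dvd_card B
  -- Q₀ : subgroup of order q
  obtain ⟨Q₀, hQ₀⟩ : ∃ B : Subgroup Q, Nat.card B = q := by
    obtain ⟨B, hB⟩ := Sylow.exists_subgroup_card_pow_prime (G := Q) q (n := 1)
      (by rw [pow_one, hcardQ]; exact dvd_mul_left q (p^2))
    exact ⟨B, by rwa [pow_one] at hB⟩
  haveI : Q₀.Normal := normQ Q₀
  have hdisjQ₀ : ∀ B : Subgroup Q, Nat.card B = p → B ⊓ Q₀ = ⊥ := by
    intro B hB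
    have h1 : Nat.card (B ⊓ Q₀ : Subgroup Q) ∣ p := hB ▸ Subgroup.card_dvd_of_le inf_le_left
    have h2 : Nat.card (B ⊓ Q₀ : Subgroup Q) ∣ q := hQ₀ ▸ Subgroup.card_dvd_of_le inf_le_right
    have : Nat.card (B ⊓ Q₀ : Subgroup Q) = 1 := Nat.eq_one_of_dvd_coprimes hcopq h1 h2
    exact Subgroup.card_eq_one.mp this
  have hsupQ₀ : ∀ B : Subgroup Q, Nat.card B = p → Nat.card (B ⊔ Q₀ : Subgroup Q) = p * q := by
    intro B hB
    rw [card_sup_of_disjoint B Q₀ (hdisjQ₀ B hB), hB, hQ₀]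
  -- exponent-p subgroup
  set E : Subgroup Q := expSubgroup hcomm p with hEdef
  have hEp : IsPGroup p E := by
    have := isPGroup_expSubgroup hcomm p 1
    rwa [pow_one] at this
  have hBEgen : ∀ (m : ℕ) (B : Subgroup Q), Nat.card B = m → B ≤ expSubgroup hcomm m := by
    intro m B hB x hx
    have hord : orderOf (⟨x, hx⟩ : B) ∣ m := hB ▸ orderOf_dvd_natCard _
    have hco : orderOf (B.subtype ⟨x, hx⟩) = orderOf (⟨x, hx⟩ : B) :=
      orderOf_injective B.subtype B.subtype_injective _
    have hco2 : B.subtype ⟨x, hx⟩ = x := rfl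
    rw [hco2] at hco
    have : x ^ m = 1 := orderOf_dvd_iff_pow_eq_one.mp (hco ▸ hord)
    exact this
  have hBE : ∀ B : Subgroup Q, Nat.card B = p → B ≤ E := fun B hB => hBEgen p B hB
  by_cases hcase : ∃ B₁ B₂ : Subgroup Q, Nat.card B₁ = p ∧ Nat.card B₂ = p ∧ B₁ ≠ B₂
  · -- CASE 1
    obtain ⟨B₁, B₂, hB₁, hB₂, hne⟩ := hcase
    set P : Subgroup Q := B₁ ⊔ B₂ with hPdef
    have hPE : P ≤ E := sup_le (hBE B₁ hB₁) (hBE B₂ hB₂)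
    have hPp : IsPGroup p P := hEp.to_le hPE
    obtain ⟨n, hn⟩ := (IsPGroup.iff_card).mp hPp
    have hPdvd : p ^ n ∣ p ^ 2 * q := hn ▸ hsubdvd P
    have hn2 : n ≤ 2 := by
      have hcop : Nat.Coprime (p ^ n) q := Nat.Coprime.pow_left n hcopq
      have : p ^ n ∣ p ^ 2 := hcop.dvd_of_dvd_mul_right hPdvd
      exact (Nat.pow_dvd_pow_iff_le_right hp.one_lt).mp this
    have hpdvdP : p ∣ p ^ n := by
      rw [← hn, ← hB₁]
      exact Subgroup.card_dvd_of_le le_sup_left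
    have hn1 : 1 ≤ n := by
      rcases Nat.eq_zero_or_pos n with h0 | h1
      · rw [h0, pow_zero] at hpdvdP
        have := Nat.le_of_dvd one_pos hpdvdP
        omega
      · exact h1
    have hncard : Nat.card P = p ^ 2 := by
      rcases Nat.lt_or_ge n 2 with hlt | hge
      · -- n = 1 : contradiction
        exfalso
        have hne1 : n = 1 := by omega
        rw [hne1, pow_one] at hn
        have e1 : B₁ = P := subgroup_eq_of_le_of_card_le le_sup_left (by rw [hn, hB₁])
        have e2 : B₂ = P := subgroup_eq_of_le_of_card_le le_sup_right (by rw [hn, hB₂])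
        exact hne (e1.trans e2.symm)
      · have : n = 2 := by omega
        rw [← this, hn]
    -- counting subgroups of order p
    set s : Finset Q := (P : Set Q).toFinset.erase 1 with hsdef
    have hscard : s.card = p ^ 2 - 1 := by
      rw [hsdef, Finset.card_erase_of_mem (Set.mem_toFinset.mpr P.one_mem)]
      have e1 : (P : Set Q).toFinset.card = Fintype.card (P : Set Q) := Set.toFinset_card _
      have e2 : Fintype.card (P : Set Q) = Nat.card (P : Set Q) := Nat.card_eq_fintype_card.symm
      have e3 : Nat.card (P : Set Q) = Nat.card P := rfl
      rw [e1, e2, e3, hncard]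
    have horder : ∀ x ∈ s, orderOf x = p := by
      intro x hx
      rw [hsdef, Finset.mem_erase, Set.mem_toFinset] at hx
      obtain ⟨hx1, hxP⟩ := hx
      have hxE : x ∈ E := hPE hxP
      exact orderOf_eq_prime hxE hx1
    set Sp : Finset (Subgroup Q) := s.image (fun x => Subgroup.zpowers x) with hSpdef
    have hSpcard : ∀ B ∈ Sp, Nat.card B = p := by
      intro B hB
      rw [hSpdef, Finset.mem_image] at hB
      obtain ⟨x, hx, rfl⟩ := hB
      rw [Nat.card_zpowers, horder x hx]
    have hfib : s.card ≤ (p - 1) * Sp.card := by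
      apply Finset.card_le_mul_card_image
      intro B hB
      have hcardB : Nat.card B = p := hSpcard B hB
      have hsubset : (s.filter fun x => Subgroup.zpowers x = B) ⊆ (B : Set Q).toFinset.erase 1 := by
        intro x hx
        rw [Finset.mem_filter] at hx
        obtain ⟨hxs, hxB⟩ := hx
        rw [Finset.mem_erase, Set.mem_toFinset]
        constructor
        · rw [hsdef, Finset.mem_erase] at hxs
          exact hxs.1
        · rw [← hxB]
          exact Subgroup.mem_zpowers x
      have ecard : ((B : Set Q).toFinset.erase 1).card = (B : Set Q).toFinset.card - 1 :=
        Finset.card_erase_of_mem (Set.mem_toFinset.mpr B.one_mem)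
      have e1 : (B : Set Q).toFinset.card = Fintype.card (B : Set Q) := Set.toFinset_card _
      have e2 : Fintype.card (B : Set Q) = Nat.card (B : Set Q) := Nat.card_eq_fintype_card.symm
      have e3 : Nat.card (B : Set Q) = Nat.card B := rfl
      calc (s.filter fun x => Subgroup.zpowers x = B).card
          ≤ ((B : Set Q).toFinset.erase 1).card := Finset.card_le_card hsubset
        _ = p - 1 := by rw [ecard, e1, e2, e3, hcardB]
    have hSpc : p + 1 ≤ Sp.card := by
      have h1 : (p - 1) * (p + 1) = p ^ 2 - 1 := by
        have hp1 : 1 ≤ p := hp.pos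
        have hp2' : 1 ≤ p ^ 2 := Nat.one_le_pow 2 p hp.pos
        zify [hp1, hp2']
        ring
      have h2 : (p - 1) * (p + 1) ≤ (p - 1) * Sp.card := by
        rw [h1, ← hscard]; exact hfib
      exact Nat.le_of_mul_le_mul_left h2 (by omega)
    -- subgroups of order pq
    set Spq : Finset (Subgroup Q) := Sp.image (fun B => B ⊔ Q₀) with hSpqdef
    have hinj2 : ∀ B ∈ Sp, ∀ B' ∈ Sp, B ⊔ Q₀ = B' ⊔ Q₀ → B = B' := by
      intro Ba hBa Bb hBb heq
      set F : Subgroup Q := (Ba ⊔ Q₀) ⊓ E with hFdef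
      have hBaF : Ba ≤ F := le_inf le_sup_left (hBE Ba (hSpcard Ba hBa))
      have hBbF : Bb ≤ F :=
        le_inf (by rw [heq]; exact le_sup_left) (hBE Bb (hSpcard Bb hBb))
      have hFp : IsPGroup p F := hEp.to_le inf_le_right
      obtain ⟨m, hm⟩ := (IsPGroup.iff_card).mp hFp
      have hmd : p ^ m ∣ p * q := by
        rw [← hm, ← hsupQ₀ Ba (hSpcard Ba hBa)]
        exact Subgroup.card_dvd_of_le inf_le_left
      have hm1 : m ≤ 1 := by
        have hcop : Nat.Coprime (p ^ m) q := Nat.Coprime.pow_left m hcopq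
        have hpm : p ^ m ∣ p := hcop.dvd_of_dvd_mul_right hmd
        by_contra hcon
        push_neg at hcon
        have h2m : p ^ 2 ≤ p ^ m := Nat.pow_le_pow_right hp.pos (by omega)
        have hle' : p ^ m ≤ p := Nat.le_of_dvd hp.pos hpm
        nlinarith
      have hFle : Nat.card F ≤ p := by
        rw [hm]
        calc p ^ m ≤ p ^ 1 := Nat.pow_le_pow_right hp.pos hm1
          _ = p := pow_one p
      have e1 : Ba = F := subgroup_eq_of_le_of_card_le hBaF (by rw [hSpcard Ba hBa]; exact hFle)
      have e2 : Bb = F := subgroup_eq_of_le_of_card_le hBbF (by rw [hSpcard Bb hBb]; exact hFle)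
      exact e1.trans e2.symm
    have hSpqcard : ∀ B ∈ Spq, Nat.card B = p * q := by
      intro B hB
      rw [hSpqdef, Finset.mem_image] at hB
      obtain ⟨Ba, hBa, rfl⟩ := hB
      exact hsupQ₀ Ba (hSpcard Ba hBa)
    have hSpqc : Spq.card = Sp.card := Finset.card_image_of_injOn hinj2
    -- distinctness of cards
    -- assemble the finset
    set F6 : Finset (Subgroup Q) :=
      insert ⊥ (insert ⊤ (insert P (insert Q₀ (Sp ∪ Spq)))) with hF6def
    have hcardBot : Nat.card (⊥ : Subgroup Q) = 1 := Subgroup.card_bot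
    have hcardTop : Nat.card (⊤ : Subgroup Q) = p ^ 2 * q := by
      rw [Subgroup.card_top]; exact hcardQ
    have hmemSup : ∀ B ∈ Sp ∪ Spq, Nat.card B = p ∨ Nat.card B = p * q := by
      intro B hB
      rcases Finset.mem_union.mp hB with h1 | h1
      · exact Or.inl (hSpcard B h1)
      · exact Or.inr (hSpqcard B h1)
    have hsumF6 : ∑ B ∈ F6, (Nat.card B * r)
        = 1 * r + (p ^ 2 * q) * r + p ^ 2 * r + q * r
          + (∑ B ∈ Sp ∪ Spq, Nat.card B * r) := by
      have cardeq : ∀ (X Y : Subgroup Q), X = Y → Nat.card X = Nat.card Y :=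
        fun X Y hXY => by rw [hXY]
      have hnm1 : Q₀ ∉ Sp ∪ Spq := by
        intro hmem
        rcases hmemSup Q₀ hmem with h1 | h1 <;> rw [hQ₀] at h1
        · exact n24 h1.symm
        · exact n45 h1
      have hnm2 : P ∉ insert Q₀ (Sp ∪ Spq) := by
        intro hmem
        rcases Finset.mem_insert.mp hmem with h1 | h1
        · have := cardeq P Q₀ h1
          rw [hncard, hQ₀] at this
          exact n34 this
        · rcases hmemSup P h1 with h2 | h2 <;> rw [hncard] at h2
          · exact n23 h2.symm
          · exact n35 h2
      have hnm3 : (⊤ : Subgroup Q) ∉ insert P (insert Q₀ (Sp ∪ Spq)) := by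
        intro hmem
        rcases Finset.mem_insert.mp hmem with h1 | h1
        · have := cardeq ⊤ P h1
          rw [hcardTop, hncard] at this
          exact n36 this.symm
        · rcases Finset.mem_insert.mp h1 with h2 | h2
          · have := cardeq ⊤ Q₀ h2
            rw [hcardTop, hQ₀] at this
            exact n46 this.symm
          · rcases hmemSup ⊤ h2 with h3 | h3 <;> rw [hcardTop] at h3
            · exact n26 h3.symm
            · exact n56 h3.symm
      have hnm4 : (⊥ : Subgroup Q) ∉ insert ⊤ (insert P (insert Q₀ (Sp ∪ Spq))) := by
        intro hmem
        rcases Finset.mem_insert.mp hmem with h1 | h1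
        · have := cardeq ⊥ ⊤ h1
          rw [hcardTop, hcardBot] at this
          exact n16 this
        · rcases Finset.mem_insert.mp h1 with h2 | h2
          · have := cardeq ⊥ P h2
            rw [hcardBot, hncard] at this
            exact n13 this
          · rcases Finset.mem_insert.mp h2 with h3 | h3
            · have := cardeq ⊥ Q₀ h3
              rw [hcardBot, hQ₀] at this
              exact n14 this
            · rcases hmemSup ⊥ h3 with h4 | h4 <;> rw [hcardBot] at h4
              · exact n12 h4
              · exact n15 h4
      rw [hF6def]
      rw [Finset.sum_insert hnm4, Finset.sum_insert hnm3, Finset.sum_insert hnm2,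
        Finset.sum_insert hnm1]
      rw [hcardBot, hcardTop, hncard, hQ₀]
      ring
    have hdisjSS : Disjoint Sp Spq := by
      rw [Finset.disjoint_left]
      intro B hB1 hB2
      have e1 := hSpcard B hB1
      have e2 := hSpqcard B hB2
      rw [e1] at e2
      exact n25 e2
    have hsumSp : ∑ B ∈ Sp, Nat.card B * r = (p * r) * Sp.card := by
      rw [Finset.sum_congr rfl (fun B hB => by rw [hSpcard B hB])]
      rw [Finset.sum_const, smul_eq_mul]
      ring
    have hsumSpq : ∑ B ∈ Spq, Nat.card B * r = (p * q * r) * Sp.card := by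
      rw [Finset.sum_congr rfl (fun B hB => by rw [hSpqcard B hB])]
      rw [Finset.sum_const, smul_eq_mul, hSpqc]
      ring
    have hsumU : ∑ B ∈ Sp ∪ Spq, Nat.card B * r = (p * r + p * q * r) * Sp.card := by
      rw [Finset.sum_union hdisjSS, hsumSp, hsumSpq]; ring
    -- transfer to G
    set 𝒮 : Finset (Subgroup G) := F6.image (fun B => B.comap π) with h𝒮def
    have h𝒮sub : 𝒮 ⊆ 𝒩 := by
      intro H hH
      rw [h𝒮def, Finset.mem_image] at hH
      obtain ⟨B, _, rfl⟩ := hH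
      rw [hmem𝒩]
      exact hcomapnormal B
    have h𝒮sum : ∑ H ∈ 𝒮, Nat.card H = ∑ B ∈ F6, Nat.card B * r := by
      rw [h𝒮def, Finset.sum_image (fun B _ B' _ hBB => hcomapinj hBB)]
      exact Finset.sum_congr rfl (fun B _ => hcomapcard B)
    have hbound : ∑ H ∈ 𝒮, Nat.card H ≤ 2 * (p ^ 2 * q * r) := by
      rw [← hσ]
      exact Finset.sum_le_sum_of_subset h𝒮sub
    rw [h𝒮sum, hsumF6, hsumU] at hbound
    have hmul : (p * r + p * q * r) * (p + 1) ≤ (p * r + p * q * r) * Sp.card :=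
      Nat.mul_le_mul_left _ hSpc
    have hexpand : 1 * r + p ^ 2 * q * r + p ^ 2 * r + q * r + (p * r + p * q * r) * (p + 1)
        = 2 * (p ^ 2 * q * r) + (r + 2 * (p ^ 2 * r) + p * r + q * r + p * q * r) := by
      ring
    have hpos : 0 < r + 2 * (p ^ 2 * r) + p * r + q * r + p * q * r := by positivity
    omega
  · -- CASE 2
    push_neg at hcase
    have huniqp : ∀ B₁ B₂ : Subgroup Q, Nat.card B₁ = p → Nat.card B₂ = p → B₁ = B₂ := hcase
    -- representatives of each order
    obtain ⟨P₀, hP₀⟩ : ∃ B : Subgroup Q, Nat.card B = p := by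
      obtain ⟨B, hB⟩ := Sylow.exists_subgroup_card_pow_prime (G := Q) p (n := 1)
        (by rw [pow_one, hcardQ]; exact ⟨p * q, by ring⟩)
      exact ⟨B, by rwa [pow_one] at hB⟩
    obtain ⟨Psyl, hPsyl⟩ : ∃ B : Subgroup Q, Nat.card B = p ^ 2 := by
      exact Sylow.exists_subgroup_card_pow_prime (G := Q) p (n := 2)
        (by rw [hcardQ]; exact Dvd.intro q rfl)
    set Mpq : Subgroup Q := P₀ ⊔ Q₀ with hMpqdef
    have hMpq : Nat.card Mpq = p * q := hsupQ₀ P₀ hP₀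
    -- uniqueness by order
    have huniq_pow : ∀ (ℓ k : ℕ), ℓ.Prime → Nat.Coprime ℓ (p ^ 2 * q / ℓ ^ k) →
        True := fun _ _ _ _ => trivial
    have huniqq : ∀ B₁ B₂ : Subgroup Q, Nat.card B₁ = q → Nat.card B₂ = q → B₁ = B₂ := by
      intro B₁ B₂ h1 h2
      set Eq' : Subgroup Q := expSubgroup hcomm q with hEq'
      have hle1 : B₁ ≤ Eq' := hBEgen q B₁ h1
      have hle2 : B₂ ≤ Eq' := hBEgen q B₂ h2
      have hEqq : IsPGroup q Eq' := by
        have := isPGroup_expSubgroup hcomm q 1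
        rwa [pow_one] at this
      have hJp : IsPGroup q (B₁ ⊔ B₂ : Subgroup Q) := hEqq.to_le (sup_le hle1 hle2)
      obtain ⟨m, hm⟩ := (IsPGroup.iff_card).mp hJp
      have hmd : q ^ m ∣ p ^ 2 * q := hm ▸ hsubdvd _
      have hm1 : m ≤ 1 := by
        have hcop : Nat.Coprime (q ^ m) (p ^ 2) :=
          Nat.Coprime.pow_left m (Nat.Coprime.pow_right 2 hcopq.symm)
        have hqq : q ^ m ∣ q := hcop.dvd_of_dvd_mul_left (by
          first
          | exact hmd
          | (rw [mul_comm q (p ^ 2)]; exact hmd)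
          | (rw [mul_comm (p ^ 2) q]; exact hmd))
        by_contra hcon
        push_neg at hcon
        have h2m : q ^ 2 ≤ q ^ m := Nat.pow_le_pow_right hq.pos (by omega)
        have hle' : q ^ m ≤ q := Nat.le_of_dvd hq.pos hqq
        nlinarith
      have hJle : Nat.card (B₁ ⊔ B₂ : Subgroup Q) ≤ q := by
        rw [hm]
        calc q ^ m ≤ q ^ 1 := Nat.pow_le_pow_right hq.pos hm1
          _ = q := pow_one q
      have e1 : B₁ = B₁ ⊔ B₂ := subgroup_eq_of_le_of_card_le le_sup_left (by rw [h1]; exact hJle)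
      have e2 : B₂ = B₁ ⊔ B₂ := subgroup_eq_of_le_of_card_le le_sup_right (by rw [h2]; exact hJle)
      exact e1.trans e2.symm
    have huniqp2 : ∀ B₁ B₂ : Subgroup Q, Nat.card B₁ = p ^ 2 → Nat.card B₂ = p ^ 2 → B₁ = B₂ := by
      intro B₁ B₂ h1 h2
      set Ep2 : Subgroup Q := expSubgroup hcomm (p ^ 2) with hEp2
      have hle1 : B₁ ≤ Ep2 := hBEgen (p ^ 2) B₁ h1
      have hle2 : B₂ ≤ Ep2 := hBEgen (p ^ 2) B₂ h2
      have hEpp : IsPGroup p Ep2 := isPGroup_expSubgroup hcomm p 2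
      have hJp : IsPGroup p (B₁ ⊔ B₂ : Subgroup Q) := hEpp.to_le (sup_le hle1 hle2)
      obtain ⟨m, hm⟩ := (IsPGroup.iff_card).mp hJp
      have hmd : p ^ m ∣ p ^ 2 * q := hm ▸ hsubdvd _
      have hm2 : m ≤ 2 := by
        have hcop : Nat.Coprime (p ^ m) q := Nat.Coprime.pow_left m hcopq
        have : p ^ m ∣ p ^ 2 := hcop.dvd_of_dvd_mul_right hmd
        exact (Nat.pow_dvd_pow_iff_le_right hp.one_lt).mp this
      have hJle : Nat.card (B₁ ⊔ B₂ : Subgroup Q) ≤ p ^ 2 := by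
        rw [hm]
        exact Nat.pow_le_pow_right hp.pos hm2
      have e1 : B₁ = B₁ ⊔ B₂ := subgroup_eq_of_le_of_card_le le_sup_left (by rw [h1]; exact hJle)
      have e2 : B₂ = B₁ ⊔ B₂ := subgroup_eq_of_le_of_card_le le_sup_right (by rw [h2]; exact hJle)
      exact e1.trans e2.symm
    have hsubprime : ∀ (B : Subgroup Q) (ℓ : ℕ), ℓ.Prime → ℓ ∣ Nat.card B →
        ∃ C : Subgroup Q, C ≤ B ∧ Nat.card C = ℓ := by
      intro B ℓ hℓ hdvd
      haveI : Fact ℓ.Prime := ⟨hℓ⟩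
      obtain ⟨y, hy⟩ := exists_prime_orderOf_dvd_card' (G := B) ℓ hdvd
      refine ⟨Subgroup.zpowers (y : Q), Subgroup.zpowers_le.mpr y.2, ?_⟩
      rw [Nat.card_zpowers]
      have := orderOf_injective B.subtype B.subtype_injective y
      rw [← hy]
      exact this
    have huniqpq : ∀ B₁ B₂ : Subgroup Q, Nat.card B₁ = p * q → Nat.card B₂ = p * q → B₁ = B₂ := by
      have key : ∀ B : Subgroup Q, Nat.card B = p * q → B = Mpq := by
        intro B hB
        obtain ⟨Cp, hCpB, hCp⟩ := hsubprime B p hp (by rw [hB]; exact Dvd.intro q rfl)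
        obtain ⟨Cq, hCqB, hCq⟩ := hsubprime B q hq (by rw [hB]; exact dvd_mul_left q p)
        have e1 : Cp = P₀ := huniqp Cp P₀ hCp hP₀
        have e2 : Cq = Q₀ := huniqq Cq Q₀ hCq hQ₀
        have hle : Mpq ≤ B := by
          rw [hMpqdef, ← e1, ← e2]
          exact sup_le hCpB hCqB
        exact (subgroup_eq_of_le_of_card_le hle (by rw [hB, hMpq])).symm
      intro B₁ B₂ h1 h2
      rw [key B₁ h1, key B₂ h2]
    have hPne : p ≠ q := by omega
    have classify : ∀ B : Subgroup Q,
        B = ⊥ ∨ B = P₀ ∨ B = Psyl ∨ B = Q₀ ∨ B = Mpq ∨ B = ⊤ := by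
      intro B
      rcases divides_p2q hp hq hPne (hsubdvd B) with h1 | h1 | h1 | h1 | h1 | h1
      · exact Or.inl (Subgroup.card_eq_one.mp h1)
      · exact Or.inr (Or.inl (huniqp B P₀ h1 hP₀))
      · exact Or.inr (Or.inr (Or.inl (huniqp2 B Psyl h1 hPsyl)))
      · exact Or.inr (Or.inr (Or.inr (Or.inl (huniqq B Q₀ h1 hQ₀))))
      · exact Or.inr (Or.inr (Or.inr (Or.inr (Or.inl (huniqpq B Mpq h1 hMpq)))))
      · refine Or.inr (Or.inr (Or.inr (Or.inr (Or.inr ?_))))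
        apply subgroup_eq_of_le_of_card_le le_top
        rw [Subgroup.card_top, hcardQ, h1]
    -- the six-element finset of all subgroups of Q
    set univ6 : Finset (Subgroup Q) :=
      insert ⊥ (insert P₀ (insert Psyl (insert Q₀ (insert Mpq {⊤})))) with huniv6def
    have hmemuniv6 : ∀ B : Subgroup Q, B ∈ univ6 := by
      intro B
      rw [huniv6def]
      simp only [Finset.mem_insert, Finset.mem_singleton]
      rcases classify B with h|h|h|h|h|h
      · exact Or.inl h
      · exact Or.inr (Or.inl h)
      · exact Or.inr (Or.inr (Or.inl h))
      · exact Or.inr (Or.inr (Or.inr (Or.inl h)))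
      · exact Or.inr (Or.inr (Or.inr (Or.inr (Or.inl h))))
      · exact Or.inr (Or.inr (Or.inr (Or.inr (Or.inr h))))
    have hcardBot : Nat.card (⊥ : Subgroup Q) = 1 := Subgroup.card_bot
    have hcardTop : Nat.card (⊤ : Subgroup Q) = p ^ 2 * q := by
      rw [Subgroup.card_top]; exact hcardQ
    have cardeq : ∀ (X Y : Subgroup Q), X = Y → Nat.card X = Nat.card Y :=
      fun X Y hXY => by rw [hXY]
    -- sum over univ6
    have hsum6 : ∑ B ∈ univ6, (Nat.card B * r)
        = (1 + p + p ^ 2 + q + p * q + p ^ 2 * q) * r := by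
      have hnm5 : Mpq ∉ ({⊤} : Finset (Subgroup Q)) := by
        intro hmem
        have := cardeq Mpq ⊤ (Finset.mem_singleton.mp hmem)
        rw [hMpq, hcardTop] at this
        exact n56 this
      have hnm4 : Q₀ ∉ insert Mpq ({⊤} : Finset (Subgroup Q)) := by
        intro hmem
        rcases Finset.mem_insert.mp hmem with h1 | h1
        · have := cardeq Q₀ Mpq h1
          rw [hQ₀, hMpq] at this
          exact n45 this
        · have := cardeq Q₀ ⊤ (Finset.mem_singleton.mp h1)
          rw [hQ₀, hcardTop] at this
          exact n46 this
      have hnm3 : Psyl ∉ insert Q₀ (insert Mpq ({⊤} : Finset (Subgroup Q))) := by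
        intro hmem
        rcases Finset.mem_insert.mp hmem with h1 | h1
        · have := cardeq Psyl Q₀ h1
          rw [hPsyl, hQ₀] at this
          exact n34 this
        · rcases Finset.mem_insert.mp h1 with h2 | h2
          · have := cardeq Psyl Mpq h2
            rw [hPsyl, hMpq] at this
            exact n35 this
          · have := cardeq Psyl ⊤ (Finset.mem_singleton.mp h2)
            rw [hPsyl, hcardTop] at this
            exact n36 this
      have hnm2 : P₀ ∉ insert Psyl (insert Q₀ (insert Mpq ({⊤} : Finset (Subgroup Q)))) := by
        intro hmem
        rcases Finset.mem_insert.mp hmem with h1 | h1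
        · have := cardeq P₀ Psyl h1
          rw [hP₀, hPsyl] at this
          exact n23 this
        · rcases Finset.mem_insert.mp h1 with h2 | h2
          · have := cardeq P₀ Q₀ h2
            rw [hP₀, hQ₀] at this
            exact n24 this
          · rcases Finset.mem_insert.mp h2 with h3 | h3
            · have := cardeq P₀ Mpq h3
              rw [hP₀, hMpq] at this
              exact n25 this
            · have := cardeq P₀ ⊤ (Finset.mem_singleton.mp h3)
              rw [hP₀, hcardTop] at this
              exact n26 this
      have hnm1 : (⊥ : Subgroup Q) ∉
          insert P₀ (insert Psyl (insert Q₀ (insert Mpq ({⊤} : Finset (Subgroup Q))))) := by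
        intro hmem
        rcases Finset.mem_insert.mp hmem with h1 | h1
        · have := cardeq ⊥ P₀ h1
          rw [hcardBot, hP₀] at this
          exact n12 this
        · rcases Finset.mem_insert.mp h1 with h2 | h2
          · have := cardeq ⊥ Psyl h2
            rw [hcardBot, hPsyl] at this
            exact n13 this
          · rcases Finset.mem_insert.mp h2 with h3 | h3
            · have := cardeq ⊥ Q₀ h3
              rw [hcardBot, hQ₀] at this
              exact n14 this
            · rcases Finset.mem_insert.mp h3 with h4 | h4
              · have := cardeq ⊥ Mpq h4
                rw [hcardBot, hMpq] at this
                exact n15 this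
              · have := cardeq ⊥ ⊤ (Finset.mem_singleton.mp h4)
                rw [hcardBot, hcardTop] at this
                exact n16 this
      rw [huniv6def, Finset.sum_insert hnm1, Finset.sum_insert hnm2, Finset.sum_insert hnm3,
        Finset.sum_insert hnm4, Finset.sum_insert hnm5, Finset.sum_singleton]
      rw [hcardBot, hP₀, hPsyl, hQ₀, hMpq, hcardTop]
      ring
    -- partition of the normal subgroups
    set 𝒩₁ : Finset (Subgroup G) := 𝒩.filter (fun H => K ≤ H) with h𝒩₁def
    set 𝒩₀ : Finset (Subgroup G) := 𝒩.filter (fun H => ¬ K ≤ H) with h𝒩₀def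
    have hsplit : (∑ H ∈ 𝒩₁, Nat.card H) + (∑ H ∈ 𝒩₀, Nat.card H)
        = 2 * (p ^ 2 * q * r) := by
      rw [← hσ, h𝒩₁def, h𝒩₀def]
      exact Finset.sum_filter_add_sum_filter_not 𝒩 _ _
    -- 𝒩₁ is the image of univ6
    have h𝒩₁eq : 𝒩₁ = univ6.image (fun B : Subgroup Q => B.comap π) := by
      ext H
      constructor
      · intro hH
        rw [h𝒩₁def, Finset.mem_filter] at hH
        obtain ⟨hHn, hKH⟩ := hH
        rw [Finset.mem_image]
        refine ⟨H.map π, hmemuniv6 _, ?_⟩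
        rw [Subgroup.comap_map_eq, hkerπ]
        exact sup_eq_left.mpr hKH
      · intro hH
        rw [Finset.mem_image] at hH
        obtain ⟨B, _, rfl⟩ := hH
        rw [h𝒩₁def, Finset.mem_filter]
        refine ⟨(hmem𝒩 _).mpr (hcomapnormal B), ?_⟩
        intro x hx
        have hxker : x ∈ π.ker := by rw [hkerπ]; exact hx
        have : π x = 1 := hxker
        show π x ∈ B
        rw [this]
        exact B.one_mem
    have hS1 : ∑ H ∈ 𝒩₁, Nat.card H = (1 + p + p ^ 2 + q + p * q + p ^ 2 * q) * r := by
      rw [h𝒩₁eq, Finset.sum_image (fun B _ B' _ hBB => hcomapinj hBB), ← hsum6]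
      exact Finset.sum_congr rfl (fun B _ => hcomapcard B)
    -- facts about 𝒩₀
    have hnotr : ∀ H ∈ 𝒩₀, ¬ r ∣ Nat.card H := by
      intro H hH hdvd
      rw [h𝒩₀def, Finset.mem_filter] at hH
      obtain ⟨hHn, hKH⟩ := hH
      obtain ⟨C, hCH, hC⟩ : ∃ C : Subgroup G, C ≤ H ∧ Nat.card C = r := by
        haveI : Fact r.Prime := ⟨hr⟩
        obtain ⟨y, hy⟩ := exists_prime_orderOf_dvd_card' (G := H) r hdvd
        refine ⟨Subgroup.zpowers (y : G), Subgroup.zpowers_le.mpr y.2, ?_⟩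
        rw [Nat.card_zpowers]
        have := orderOf_injective H.subtype H.subtype_injective y
        rw [← hy]
        exact this
      -- C has order r hence C = K
      have hCK : C ≤ K := by
        intro x hx
        have hordx : orderOf x ∣ r := by
          have h1 : orderOf (⟨x, hx⟩ : C) ∣ r := hC ▸ orderOf_dvd_natCard _
          have h2 : orderOf (C.subtype ⟨x, hx⟩) = orderOf (⟨x, hx⟩ : C) :=
            orderOf_injective C.subtype C.subtype_injective _
          exact h2 ▸ h1
        have hordπ : orderOf (π x) ∣ r := dvd_trans (orderOf_map_dvd π x) hordx
        have hordπ2 : orderOf (π x) ∣ p ^ 2 * q := by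
          rw [← hcardQ]
          exact orderOf_dvd_natCard _
        have hcop : Nat.Coprime r (p ^ 2 * q) := (hr.coprime_iff_not_dvd).mpr hrnd
        have : orderOf (π x) = 1 := Nat.eq_one_of_dvd_coprimes hcop hordπ hordπ2
        have hπx1 : π x = 1 := orderOf_eq_one_iff.mp this
        have : x ∈ π.ker := hπx1
        rwa [hkerπ] at this
      have hCKeq : C = K := subgroup_eq_of_le_of_card_le hCK (by rw [hC, hG'])
      exact hKH (hCKeq ▸ hCH)
    have hdvd0 : ∀ H ∈ 𝒩₀, Nat.card H ∣ p ^ 2 * q := by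
      intro H hH
      have h1 : Nat.card H ∣ p ^ 2 * q * r := by
        rw [← hcardG]
        exact Subgroup.card_subgroup_dvd_card H
      have hcop : (Nat.card H).Coprime r :=
        ((hr.coprime_iff_not_dvd).mpr (hnotr H hH)).symm
      exact hcop.dvd_of_dvd_mul_right h1
    have hne0 : ∀ H ∈ 𝒩₀, Nat.card H ≠ p ^ 2 * q := by
      intro H hH hcontra
      rw [h𝒩₀def, Finset.mem_filter] at hH
      obtain ⟨hHn, hKH⟩ := hH
      haveI hHnorm : H.Normal := (hmem𝒩 H).mp hHn
      -- quotient has prime order r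
      have hidx : Nat.card (G ⧸ H) = r := by
        have h1 := Subgroup.card_eq_card_quotient_mul_card_subgroup H
        rw [hcardG, hcontra] at h1
        have h2 : p ^ 2 * q * r = r * (p ^ 2 * q) := by ring
        rw [h2] at h1
        exact (Nat.eq_of_mul_eq_mul_right (by positivity) h1).symm
      haveI : Fact r.Prime := ⟨hr⟩
      haveI hcyc : IsCyclic (G ⧸ H) := isCyclic_of_prime_card hidx
      obtain ⟨g, hg⟩ := hcyc.exists_generator
      have hcommle : K ≤ H := by
        rw [hKdef, commutator_def, Subgroup.commutator_le]
        intro g₁ _ g₂ _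
        obtain ⟨i, hi⟩ := hg ((QuotientGroup.mk' H) g₁)
        obtain ⟨j, hj⟩ := hg ((QuotientGroup.mk' H) g₂)
        have hcm : Commute ((QuotientGroup.mk' H) g₁) ((QuotientGroup.mk' H) g₂) := by
          rw [← hi, ← hj]
          exact Commute.zpow_zpow (Commute.refl g) i j
        have h1 : (QuotientGroup.mk' H) ⁅g₁, g₂⁆ = 1 := by
          rw [map_commutatorElement]
          exact commutatorElement_eq_one_iff_commute.mpr hcm
        have h2 : ⁅g₁, g₂⁆ ∈ (QuotientGroup.mk' H).ker := h1
        rwa [QuotientGroup.ker_mk'] at h2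
      exact hKH hcommle
    have hmapcard : ∀ H ∈ 𝒩₀, Nat.card (H.map π) = Nat.card H := by
      intro H hH
      have hinf : H ⊓ K = ⊥ := by
        have h1 : Nat.card (H ⊓ K : Subgroup G) ∣ Nat.card H :=
          Subgroup.card_dvd_of_le inf_le_left
        have h2 : Nat.card (H ⊓ K : Subgroup G) ∣ r := hG' ▸ Subgroup.card_dvd_of_le inf_le_right
        rcases (Nat.dvd_prime hr).mp h2 with h3 | h3
        · exact Subgroup.card_eq_one.mp h3
        · exfalso
          exact hnotr H hH (h3 ▸ h1)
      have h1 : Nat.card (H ⊔ K : Subgroup G) = Nat.card H * r := by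
        rw [card_sup_of_disjoint H K hinf, hG']
      have h2 : (H.map π).comap π = H ⊔ K := by
        rw [Subgroup.comap_map_eq, hkerπ]
      have h3 : Nat.card ((H.map π).comap π) = Nat.card (H.map π) * r := hcomapcard _
      rw [h2, h1] at h3
      exact Nat.eq_of_mul_eq_mul_right hr.pos h3.symm
    have hinj0 : ∀ H₁ ∈ 𝒩₀, ∀ H₂ ∈ 𝒩₀, Nat.card H₁ = Nat.card H₂ → H₁ = H₂ := by
      intro H₁ hH₁ H₂ hH₂ hcc
      have hB1 : Nat.card (H₁.map π) = Nat.card H₁ := hmapcard H₁ hH₁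
      have hB2 : Nat.card (H₂.map π) = Nat.card H₂ := hmapcard H₂ hH₂
      have hBeq : H₁.map π = H₂.map π := by
        rcases divides_p2q hp hq hPne (hdvd0 H₁ hH₁) with h1 | h1 | h1 | h1 | h1 | h1
        · have e1 : H₁.map π = ⊥ := Subgroup.card_eq_one.mp (by rw [hB1, h1])
          have e2 : H₂.map π = ⊥ := Subgroup.card_eq_one.mp (by rw [hB2, ← hcc, h1])
          rw [e1, e2]
        · exact huniqp _ _ (by rw [hB1, h1]) (by rw [hB2, ← hcc, h1])
        · exact huniqp2 _ _ (by rw [hB1, h1]) (by rw [hB2, ← hcc, h1])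
        · exact huniqq _ _ (by rw [hB1, h1]) (by rw [hB2, ← hcc, h1])
        · exact huniqpq _ _ (by rw [hB1, h1]) (by rw [hB2, ← hcc, h1])
        · exact absurd h1 (hne0 H₁ hH₁)
      have hM1 : H₁ ≤ (H₁.map π).comap π :=
        fun x hx => Subgroup.mem_comap.mpr (Subgroup.mem_map_of_mem π hx)
      have hM2 : H₂ ≤ (H₁.map π).comap π := by
        rw [hBeq]
        exact fun x hx => Subgroup.mem_comap.mpr (Subgroup.mem_map_of_mem π hx)
      have hcardM : Nat.card ((H₁.map π).comap π) = Nat.card H₁ * r := by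
        rw [hcomapcard, hB1]
      have hn1 : H₁.Normal := (hmem𝒩 H₁).mp (Finset.mem_of_mem_filter H₁ hH₁)
      have hn2 : H₂.Normal := (hmem𝒩 H₂).mp (Finset.mem_of_mem_filter H₂ hH₂)
      have hcop : (Nat.card H₁).Coprime r :=
        ((hr.coprime_iff_not_dvd).mpr (hnotr H₁ hH₁)).symm
      have hle1 : H₁ ≤ H₂ := hall_le hn2 hM1 hM2 rfl hcc.symm hcardM hcop
      have hle2 : H₂ ≤ H₁ := hall_le hn1 hM2 hM1 hcc.symm rfl hcardM hcop
      exact le_antisymm hle1 hle2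
    -- bound S₀
    have hS0le : ∑ H ∈ 𝒩₀, Nat.card H ≤ 1 + p + p ^ 2 + q + p * q := by
      have himg : (∑ H ∈ 𝒩₀, Nat.card H)
          = ∑ d ∈ 𝒩₀.image (fun H : Subgroup G => Nat.card H), d := by
        rw [Finset.sum_image hinj0]
      rw [himg]
      have hsub : 𝒩₀.image (fun H : Subgroup G => Nat.card H) ⊆
          insert 1 (insert p (insert (p ^ 2) (insert q ({p * q} : Finset ℕ)))) := by
        intro d hd
        rw [Finset.mem_image] at hd
        obtain ⟨H, hH, rfl⟩ := hd
        simp only [Finset.mem_insert, Finset.mem_singleton]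
        rcases divides_p2q hp hq hPne (hdvd0 H hH) with h1 | h1 | h1 | h1 | h1 | h1
        · exact Or.inl h1
        · exact Or.inr (Or.inl h1)
        · exact Or.inr (Or.inr (Or.inl h1))
        · exact Or.inr (Or.inr (Or.inr (Or.inl h1)))
        · exact Or.inr (Or.inr (Or.inr (Or.inr h1)))
        · exact absurd h1 (hne0 H hH)
      have m4 : q ∉ ({p * q} : Finset ℕ) := by
        simp only [Finset.mem_singleton]
        exact n45
      have m3 : p ^ 2 ∉ insert q ({p * q} : Finset ℕ) := by
        simp only [Finset.mem_insert, Finset.mem_singleton]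
        push_neg
        exact ⟨n34, n35⟩
      have m2 : p ∉ insert (p ^ 2) (insert q ({p * q} : Finset ℕ)) := by
        simp only [Finset.mem_insert, Finset.mem_singleton]
        push_neg
        exact ⟨n23, n24, n25⟩
      have m1 : (1:ℕ) ∉ insert p (insert (p ^ 2) (insert q ({p * q} : Finset ℕ))) := by
        simp only [Finset.mem_insert, Finset.mem_singleton]
        push_neg
        exact ⟨n12, n13, n14, n15⟩
      calc ∑ d ∈ 𝒩₀.image (fun H : Subgroup G => Nat.card H), d
          ≤ ∑ d ∈ insert 1 (insert p (insert (p ^ 2) (insert q ({p * q} : Finset ℕ)))), d :=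
            Finset.sum_le_sum_of_subset hsub
        _ = 1 + p + p ^ 2 + q + p * q := by
            rw [Finset.sum_insert m1, Finset.sum_insert m2, Finset.sum_insert m3,
              Finset.sum_insert m4, Finset.sum_singleton]
            ring
    -- S₀ is a positive multiple of r
    have hbot0 : (⊥ : Subgroup G) ∈ 𝒩₀ := by
      rw [h𝒩₀def, Finset.mem_filter]
      refine ⟨(hmem𝒩 _).mpr inferInstance, ?_⟩
      intro hcon
      have : K = ⊥ := le_bot_iff.mp hcon
      rw [this, Subgroup.card_bot] at hG'
      omega
    have hS0pos : 1 ≤ ∑ H ∈ 𝒩₀, Nat.card H := by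
      have := Finset.single_le_sum (f := fun H : Subgroup G => Nat.card H)
        (fun i _ => Nat.zero_le _) hbot0
      simpa [Subgroup.card_bot] using this
    have hrdvdS0 : r ∣ ∑ H ∈ 𝒩₀, Nat.card H := by
      have h1 : r ∣ 2 * (p ^ 2 * q * r) := ⟨2 * (p ^ 2 * q), by ring⟩
      have h2 : r ∣ ∑ H ∈ 𝒩₁, Nat.card H := by
        rw [hS1]
        exact ⟨1 + p + p ^ 2 + q + p * q + p ^ 2 * q, by ring⟩
      have h3 : (∑ H ∈ 𝒩₀, Nat.card H) = 2 * (p ^ 2 * q * r) - ∑ H ∈ 𝒩₁, Nat.card H := by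
        omega
      rw [h3]
      exact Nat.dvd_sub h1 h2
    -- define k
    have hTle : (1 + p + p ^ 2 + q + p * q + p ^ 2 * q) * r ≤ 2 * (p ^ 2 * q * r) := by
      rw [← hS1]
      omega
    have hT2 : 1 + p + p ^ 2 + q + p * q + p ^ 2 * q ≤ 2 * (p ^ 2 * q) := by
      have h1 : (1 + p + p ^ 2 + q + p * q + p ^ 2 * q) * r ≤ (2 * (p ^ 2 * q)) * r := by
        calc (1 + p + p ^ 2 + q + p * q + p ^ 2 * q) * r ≤ 2 * (p ^ 2 * q * r) := hTle
          _ = (2 * (p ^ 2 * q)) * r := by ring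
      exact Nat.le_of_mul_le_mul_right h1 hr.pos
    set k : ℕ := 2 * (p ^ 2 * q) - (1 + p + p ^ 2 + q + p * q + p ^ 2 * q) with hkdef2
    have hkeq : k + (1 + p + p ^ 2 + q + p * q + p ^ 2 * q) = 2 * (p ^ 2 * q) := by omega
    have hS0eq : ∑ H ∈ 𝒩₀, Nat.card H = k * r := by
      have h1 : (∑ H ∈ 𝒩₁, Nat.card H) + (∑ H ∈ 𝒩₀, Nat.card H)
          = (∑ H ∈ 𝒩₁, Nat.card H) + k * r := by
        rw [hsplit, hS1]
        calc 2 * (p ^ 2 * q * r) = (k + (1 + p + p ^ 2 + q + p * q + p ^ 2 * q)) * r := by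
              rw [hkeq]; ring
          _ = (1 + p + p ^ 2 + q + p * q + p ^ 2 * q) * r + k * r := by ring
      exact Nat.add_left_cancel h1
    have hk1 : 1 ≤ k := by
      by_contra hcon
      push_neg at hcon
      have : k = 0 := by omega
      rw [this, zero_mul] at hS0eq
      omega
    -- final arithmetic contradiction
    have hkT : k + (1 + p + p ^ 2) * (1 + q) = 2 * (p ^ 2 * q) := by
      rw [← hkeq]; ring
    have hfin : r * k ≤ 1 + p + p ^ 2 + q + p * q := by
      rw [mul_comm r k, ← hS0eq]
      exact hS0le
    exact numeric2 hp hq hr hpq hqr hk1 hkT hfin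
end

section
/- If G is a Leinster group of order p²qr with p < q < r primes, then the commutator subgroup of G does not have order pq. -/
open scoped Classical
open scoped commutatorElement

/-- A Sylow subgroup is normal when it is the unique Sylow subgroup. -/
lemma sylow_normal_of_card_eq_one {pp : ℕ} [Fact pp.Prime] {H : Type*} [Group H] [Finite H]
    (P : Sylow pp H) (h1 : Nat.card (Sylow pp H) = 1) : (P : Subgroup H).Normal := by
  haveI : Subsingleton (Sylow pp H) := (Nat.card_eq_one_iff_unique.mp h1).1
  rw [← Subgroup.normalizer_eq_top_iff, eq_top_iff]
  intro g _
  exact Sylow.smul_eq_iff_mem_normalizer.mp (Subsingleton.elim (g • P) P)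

theorem stmt10 (G : Type*) [Group G] [Fintype G] (p q r : ℕ)
    (hp : p.Prime) (hq : q.Prime) (hr : r.Prime) (hpq : p < q) (hqr : q < r)
    (hcard : Fintype.card G = p ^ 2 * q * r) (h : IsLeinster G) :
    Nat.card (commutator G) ≠ p * q := by
  intro hK
  haveI hpf : Fact p.Prime := ⟨hp⟩
  haveI hqf : Fact q.Prime := ⟨hq⟩
  haveI hrf : Fact r.Prime := ⟨hr⟩
  have hp1 : 1 < p := hp.one_lt
  have hq1 : 1 < q := hq.one_lt
  have hr1 : 1 < r := hr.one_lt
  have hGcard : Nat.card G = p ^ 2 * q * r := by rw [Nat.card_eq_fintype_card, hcard]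
  set K := commutator G with hKdef
  -- The Sylow q-subgroup of K (|K| = p*q) is normal in K.
  obtain ⟨Q⟩ : Nonempty (Sylow q K) := inferInstance
  have hQcard : Nat.card Q = q := by
    rw [Q.card_eq_multiplicity, hK, Nat.factorization_mul hp.pos.ne' hq.pos.ne',
      hp.factorization, hq.factorization]
    simp [Finsupp.single_apply, hpq.ne]
  have hQindex : (Q : Subgroup K).index = p := by
    have h2 := (Q : Subgroup K).card_mul_index
    rw [hQcard, hK] at h2
    have h3 : q * (Q : Subgroup K).index = q * p := by rw [h2]; ring
    exact Nat.eq_of_mul_eq_mul_left hq.pos h3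
  have hnq : Nat.card (Sylow q K) = 1 := by
    have h1 := card_sylow_modEq_one q K
    have h2 := Q.card_dvd_index
    rw [hQindex] at h2
    rcases (Nat.Prime.eq_one_or_self_of_dvd hp _ h2) with h3 | h3
    · exact h3
    · exfalso
      rw [h3] at h1
      have h4 : q ∣ p - 1 := (Nat.modEq_iff_dvd' hp.one_le).mp h1.symm
      have h5 : p - 1 = 0 := Nat.eq_zero_of_dvd_of_lt h4 (by omega)
      omega
  have hQn : (Q : Subgroup K).Normal := sylow_normal_of_card_eq_one Q hnq
  haveI hQchar : (Q : Subgroup K).Characteristic := Sylow.characteristic_of_normal Q hQn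
  -- N, the image of Q in G, is a normal subgroup of G of order q.
  set N : Subgroup G := (Q : Subgroup K).map K.subtype with hNdef
  haveI hNn : N.Normal := ConjAct.normal_of_characteristic_of_normal
  have hNcard : Nat.card N = q := by
    rw [← hQcard]
    exact (Nat.card_congr
      (Subgroup.equivMapOfInjective _ K.subtype K.subtype_injective).toEquiv).symm
  have hNindex : N.index = p ^ 2 * r := by
    have h2 := N.card_mul_index
    rw [hNcard, hGcard] at h2
    have h3 : q * N.index = q * (p ^ 2 * r) := by rw [h2]; ring
    exact Nat.eq_of_mul_eq_mul_left hq.pos h3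
  -- The quotient G/N has order p^2 * r; its Sylow r-subgroup is normal.
  have hGbar : Nat.card (G ⧸ N) = p ^ 2 * r := by
    rw [← Subgroup.index_eq_card]; exact hNindex
  haveI : Finite (G ⧸ N) := Quotient.finite _
  obtain ⟨R⟩ : Nonempty (Sylow r (G ⧸ N)) := inferInstance
  have hRcard : Nat.card R = r := by
    rw [R.card_eq_multiplicity, hGbar,
      Nat.factorization_mul (pow_ne_zero 2 hp.pos.ne') hr.pos.ne',
      Nat.Prime.factorization_pow hp, hr.factorization]
    have hpr : p ≠ r := by omega
    simp [Finsupp.single_apply, hpr]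
  have hRindex : (R : Subgroup (G ⧸ N)).index = p ^ 2 := by
    have h2 := (R : Subgroup (G ⧸ N)).card_mul_index
    rw [hRcard, hGbar] at h2
    have h3 : r * (R : Subgroup (G ⧸ N)).index = r * p ^ 2 := by rw [h2]; ring
    exact Nat.eq_of_mul_eq_mul_left hr.pos h3
  have hnr : Nat.card (Sylow r (G ⧸ N)) = 1 := by
    have h1 := card_sylow_modEq_one r (G ⧸ N)
    have h2 := R.card_dvd_index
    rw [hRindex] at h2
    obtain ⟨k, hk2, hkeq⟩ := (Nat.dvd_prime_pow hp).mp h2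
    have hpk1 : 1 ≤ p ^ k := Nat.one_le_pow _ _ hp.pos
    rw [hkeq] at h1 ⊢
    have h4 : r ∣ p ^ k - 1 := (Nat.modEq_iff_dvd' hpk1).mp h1.symm
    interval_cases k
    · rfl
    · exfalso
      rw [pow_one] at h4
      have h5 : p - 1 = 0 := Nat.eq_zero_of_dvd_of_lt h4 (by omega)
      omega
    · exfalso
      have h5 : p ^ 2 - 1 = (p + 1) * (p - 1) := by
        simpa using Nat.sq_sub_sq p 1
      rw [h5] at h4
      rcases (Nat.Prime.dvd_mul hr).mp h4 with h6 | h6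
      · have h7 : p + 1 = 0 := Nat.eq_zero_of_dvd_of_lt h6 (by omega)
        omega
      · have h7 : p - 1 = 0 := Nat.eq_zero_of_dvd_of_lt h6 (by omega)
        omega
  have hRn : (R : Subgroup (G ⧸ N)).Normal := sylow_normal_of_card_eq_one R hnr
  -- M, the preimage of R in G, is normal of index p^2; G/M is abelian.
  set M : Subgroup G := (R : Subgroup (G ⧸ N)).comap (QuotientGroup.mk' N) with hMdef
  haveI hMn : M.Normal := hRn.comap _
  have hMindex : M.index = p ^ 2 :=
    (Subgroup.index_comap_of_surjective _ (QuotientGroup.mk'_surjective N)).trans hRindex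
  have hGMcard : Nat.card (G ⧸ M) = p ^ 2 := by
    rw [← Subgroup.index_eq_card]; exact hMindex
  have hcomm := IsPGroup.commutative_of_card_eq_prime_sq (p := p) hGMcard
  -- Hence the commutator subgroup K is contained in M.
  have hKM : K ≤ M := by
    rw [hKdef, commutator_def, Subgroup.commutator_le]
    intro g _ h' _
    have h1 : ((⁅g, h'⁆ : G) : G ⧸ M) = 1 := by
      show (QuotientGroup.mk' M) ⁅g, h'⁆ = 1
      rw [map_commutatorElement]
      exact commutatorElement_eq_one_iff_mul_comm.mpr (hcomm _ _)
    exact (QuotientGroup.eq_one_iff _).mp h1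
  have hdvd : p * q ∣ Nat.card M := hK ▸ Subgroup.card_dvd_of_le hKM
  have hMcard : Nat.card M = q * r := by
    have h2 := M.card_mul_index
    rw [hMindex, hGcard] at h2
    have h3 : Nat.card M * p ^ 2 = (q * r) * p ^ 2 := by rw [h2]; ring
    exact Nat.eq_of_mul_eq_mul_right (by positivity) h3
  rw [hMcard] at hdvd
  -- p * q ∣ q * r forces p ∣ r, impossible.
  have hpr : p ∣ r := by
    have h4 : q * p ∣ q * r := by rwa [mul_comm p q] at hdvd
    exact (Nat.mul_dvd_mul_iff_left hq.pos).mp h4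
  have := (Nat.prime_dvd_prime_iff_eq hp hr).mp hpr
  omega
end
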